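/- arXiv:2605.28638 — 4 statements merged into one kernel-verified Lean document; each statement's English description precedes it below -/
import Mathlib

section
/- Let N ≥ 3, 0 < s < 1, 2 ≤ p < N/s, 0 < γ < 1, and let a satisfy (H_a). Fix n ∈ ℕ and define J_n(u) := (1/p)[u]_{s,p}^p − ∫_{ℝ^N} A(x, u(x)) dx on D^{s,p}(ℝ^N), where A(x,t) := ∫_0^t a(x)(τ_+ + 1/n)^{−γ} dτ. Then J_n is coercive: there exist constants c > 0 and C ≥ 0 (independent of u) such that J_n(u) ≥ c [u]_{s,p}^p − C for all u ∈ D^{s,p}(ℝ^N); in particular J_n(u) → +∞ as [u]_{s,p} → ∞. -/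
open MeasureTheory Metric

noncomputable section

/-- Euclidean space `ℝ^N`. -/
abbrev RN (N : ℕ) := EuclideanSpace ℝ (Fin N)

/-- The `p`-th power of the Gagliardo seminorm `[u]_{s,p}^p`. -/
def gagliardoP (N : ℕ) (s p : ℝ) (u : RN N → ℝ) : ℝ :=
  ∫ z : RN N × RN N, |u z.1 - u z.2| ^ p / ‖z.1 - z.2‖ ^ ((N : ℝ) + s * p)

/-- The Gagliardo seminorm `[u]_{s,p}`. -/
def gagliardoSemi (N : ℕ) (s p : ℝ) (u : RN N → ℝ) : ℝ :=
  (gagliardoP N s p u) ^ (1 / p)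

/-- The critical exponent `p* = Np/(N - sp)`. -/
def pStar (N : ℕ) (s p : ℝ) : ℝ := (N : ℝ) * p / ((N : ℝ) - s * p)

/-- Membership in the homogeneous fractional Sobolev space `D^{s,p}(ℝ^N)`. -/
def DspMem (N : ℕ) (s p : ℝ) (u : RN N → ℝ) : Prop :=
  MemLp u (ENNReal.ofReal (pStar N s p)) volume ∧
  Integrable (fun z : RN N × RN N =>
    |u z.1 - u z.2| ^ p / ‖z.1 - z.2‖ ^ ((N : ℝ) + s * p)) volume

/-- The weak pairing `⟨(−Δ_p)^s u, v⟩`. -/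
def fracPair (N : ℕ) (s p : ℝ) (u v : RN N → ℝ) : ℝ :=
  ∫ z : RN N × RN N,
    |u z.1 - u z.2| ^ (p - 2) * (u z.1 - u z.2) * (v z.1 - v z.2) /
      ‖z.1 - z.2‖ ^ ((N : ℝ) + s * p)

/-- The weight `w(x) = 1/(1+|x|^{N+α})`. -/
def weightW (N : ℕ) (α : ℝ) (x : RN N) : ℝ := 1 / (1 + ‖x‖ ^ ((N : ℝ) + α))

/-- Young-type absorption: `B * x^(1/p) ≤ ε x + C`. -/
lemma young_absorb {B p ε : ℝ} (hB : 0 ≤ B) (hp : 1 < p) (hε : 0 < ε) :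
    ∃ C : ℝ, 0 ≤ C ∧ ∀ x : ℝ, 0 ≤ x → B * x ^ (1/p) ≤ ε * x + C := by
  set T : ℝ := max 1 ((B/ε) ^ (p/(p-1))) with hT
  have hT1 : (1:ℝ) ≤ T := le_max_left _ _
  have hT0 : 0 < T := lt_of_lt_of_le one_pos hT1
  refine ⟨B * T ^ (1/p), mul_nonneg hB (Real.rpow_nonneg hT0.le _), fun x hx => ?_⟩
  rcases le_total x T with h | h
  · have : B * x ^ (1/p) ≤ B * T ^ (1/p) :=
      mul_le_mul_of_nonneg_left (Real.rpow_le_rpow hx h (by positivity)) hB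
    nlinarith [mul_nonneg hε.le hx]
  · -- x ≥ T : show B * x^(1/p) ≤ ε * x
    have hx0 : 0 < x := lt_of_lt_of_le hT0 h
    have hBe : B / ε ≤ x ^ ((p-1)/p) := by
      have h1 : (B/ε) ^ (p/(p-1)) ≤ T := le_max_right _ _
      have h2 : T ^ ((p-1)/p) ≤ x ^ ((p-1)/p) :=
        Real.rpow_le_rpow hT0.le h (div_nonneg (by linarith) (by linarith))
      have h3 : ((B/ε) ^ (p/(p-1))) ^ ((p-1)/p) ≤ T ^ ((p-1)/p) :=
        Real.rpow_le_rpow (Real.rpow_nonneg (div_nonneg hB hε.le) _) h1 (div_nonneg (by linarith) (by linarith))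
      have h4 : ((B/ε) ^ (p/(p-1))) ^ ((p-1)/p) = B/ε := by
        rw [← Real.rpow_mul (by positivity)]
        rw [show p/(p-1) * ((p-1)/p) = 1 by rw [div_mul_div_comm]; rw [div_eq_one_iff_eq (by nlinarith)]; ring]
        exact Real.rpow_one _
      linarith [h4 ▸ h3]
    have hkey : B ≤ ε * x ^ ((p-1)/p) := by
      rw [div_le_iff₀ hε] at hBe; linarith [hBe]
    have : B * x ^ (1/p) ≤ ε * x ^ ((p-1)/p) * x ^ (1/p) :=
      mul_le_mul_of_nonneg_right hkey (Real.rpow_nonneg hx _)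
    have hxx : x ^ ((p-1)/p) * x ^ (1/p) = x := by
      rw [← Real.rpow_add hx0]
      rw [show (p-1)/p + 1/p = 1 by field_simp; ring]
      exact Real.rpow_one _
    have hC : 0 ≤ B * T ^ (1/p) := mul_nonneg hB (Real.rpow_nonneg hT0.le _)
    calc B * x ^ (1/p) ≤ ε * x ^ ((p-1)/p) * x ^ (1/p) := this
      _ = ε * x := by rw [mul_assoc, hxx]
      _ ≤ ε * x + B * T ^ (1/p) := by linarith

lemma arith_key {NN sp q p ω Mq S : ℝ} (hNN : 0 < NN) (hω : 0 < ω) (hMq : 0 < Mq) (hS : 0 < S)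
    (hqsp : q * sp / NN = q - p) :
    S ^ p / (2 * ((Mq / S ^ q) / ω) ^ NN⁻¹) ^ (NN + sp) * (Mq / S ^ q) =
      2 ^ (-(NN + sp)) * ω ^ ((NN + sp) / NN) * Mq ^ (-(sp / NN)) * S ^ q := by
  have hSq : (0:ℝ) < S ^ q := Real.rpow_pos_of_pos hS q
  have hm : (0:ℝ) < Mq / S ^ q := div_pos hMq hSq
  set m : ℝ := Mq / S ^ q with hmdef
  have hr : (0:ℝ) < (m / ω) ^ NN⁻¹ := Real.rpow_pos_of_pos (div_pos hm hω) _
  set r : ℝ := (m / ω) ^ NN⁻¹ with hrdef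
  have h2r : (0:ℝ) < 2 * r := by positivity
  have h2rp : (0:ℝ) < (2*r) ^ (NN + sp) := Real.rpow_pos_of_pos h2r _
  have hL : (0:ℝ) < S ^ p / (2 * r) ^ (NN + sp) * m := by positivity
  have hR : (0:ℝ) < 2 ^ (-(NN + sp)) * ω ^ ((NN + sp) / NN) * Mq ^ (-(sp / NN)) * S ^ q := by
    have : (0:ℝ) < (2:ℝ) ^ (-(NN+sp)) := Real.rpow_pos_of_pos two_pos _
    positivity
  rw [← Real.exp_log hL, ← Real.exp_log hR]
  congr 1
  have lm : Real.log m = Real.log Mq - q * Real.log S := by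
    rw [hmdef, Real.log_div hMq.ne' hSq.ne', Real.log_rpow hS]
  have lr : Real.log r = NN⁻¹ * (Real.log m - Real.log ω) := by
    rw [hrdef, Real.log_rpow (div_pos hm hω), Real.log_div hm.ne' hω.ne']
  have lL : Real.log (S ^ p / (2 * r) ^ (NN + sp) * m) =
      p * Real.log S - (NN + sp) * (Real.log 2 + Real.log r) + Real.log m := by
    rw [Real.log_mul (by positivity) hm.ne', Real.log_div (by positivity) h2rp.ne',
      Real.log_rpow hS, Real.log_rpow h2r, Real.log_mul two_ne_zero hr.ne']
  have lR : Real.log (2 ^ (-(NN + sp)) * ω ^ ((NN + sp) / NN) * Mq ^ (-(sp / NN)) * S ^ q) =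
      (-(NN + sp)) * Real.log 2 + ((NN + sp) / NN) * Real.log ω
        + (-(sp / NN)) * Real.log Mq + q * Real.log S := by
    rw [Real.log_mul (by positivity) hSq.ne', Real.log_mul (by positivity)
        (Real.rpow_pos_of_pos hMq _).ne', Real.log_mul (Real.rpow_pos_of_pos two_pos _).ne'
        (Real.rpow_pos_of_pos hω _).ne', Real.log_rpow two_pos, Real.log_rpow hω,
      Real.log_rpow hMq, Real.log_rpow hS]
  rw [lL, lR, lm, lr, lm]
  have hq' : q * sp = (q - p) * NN := by
    field_simp at hqsp; linarith
  field_simp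
  linear_combination (Real.log S) * hq'


lemma sobolev_key (N : ℕ) (hN : 3 ≤ N) (s p : ℝ) (hs0 : 0 < s) (hp : 2 ≤ p)
    (hpN : p < (N : ℝ) / s) :
    ∃ κ : ℝ, 0 < κ ∧ ∀ u : RN N → ℝ, AEStronglyMeasurable u volume →
      Integrable (fun z : RN N × RN N =>
        |u z.1 - u z.2| ^ p / ‖z.1 - z.2‖ ^ ((N : ℝ) + s * p)) volume →
      MemLp u (ENNReal.ofReal (pStar N s p)) volume →
      κ * (∫ x : RN N, |u x| ^ (pStar N s p)) ^ (p / pStar N s p) ≤ gagliardoP N s p u := by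
  have hN0 : (0:ℝ) < N := by
    have : (3:ℝ) ≤ N := by exact_mod_cast hN
    linarith
  set NN : ℝ := (N : ℝ) with hNN
  haveI : Nonempty (Fin N) := ⟨⟨0, by omega⟩⟩
  have hp0 : (0:ℝ) < p := by linarith
  have hsp : 0 < s * p := mul_pos hs0 hp0
  have hNsp : 0 < NN - s * p := by
    rw [lt_div_iff₀ hs0] at hpN
    nlinarith
  set q : ℝ := pStar N s p with hqdef
  have hq0 : 0 < q := by rw [hqdef, pStar]; positivity
  have hqNsp : q * (NN - s * p) = NN * p := by
    rw [hqdef, pStar, ← hNN, div_mul_cancel₀ _ hNsp.ne']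
  have hpq : p < q := by
    rw [hqdef, pStar, lt_div_iff₀ hNsp]; nlinarith
  have hq1 : (1:ℝ) < q := by linarith
  have hqsp : q * (s * p) / NN = q - p := by
    rw [div_eq_iff hN0.ne']; linear_combination -hqNsp
  have hpq' : p / q = (NN - s * p) / NN := by
    rw [div_eq_div_iff hq0.ne' hN0.ne']; linear_combination -hqNsp
  set ω : ℝ := (volume (ball (0 : RN N) 1)).toReal with hωdef
  have hω : 0 < ω :=
    ENNReal.toReal_pos (measure_ball_pos _ _ one_pos).ne' measure_ball_lt_top.ne
  have hωeq : volume (ball (0 : RN N) 1) = ENNReal.ofReal ω :=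
    (ENNReal.ofReal_toReal measure_ball_lt_top.ne).symm
  have h2NN : (2:ℝ)^(3:ℝ) ≤ (2:ℝ) ^ NN := by
    apply Real.rpow_le_rpow_of_exponent_le one_le_two
    rw [hNN]; exact_mod_cast hN
  have h2NN8 : (8:ℝ) ≤ (2:ℝ) ^ NN := by
    have : (2:ℝ)^(3:ℝ) = 8 := by
      rw [show (3:ℝ) = ((3:ℕ):ℝ) by norm_num, Real.rpow_natCast]; norm_num
    linarith
  set κ : ℝ := ((2:ℝ) ^ NN - 2) * ((2:ℝ) ^ (-(NN + s*p)) * ω ^ ((NN + s*p)/NN)) *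
      (((2:ℝ) ^ q)⁻¹) with hκdef
  have hκ : 0 < κ := by
    have h1 : (0:ℝ) < (2:ℝ) ^ (-(NN + s*p)) := Real.rpow_pos_of_pos two_pos _
    have h2 : (0:ℝ) < ω ^ ((NN + s*p)/NN) := Real.rpow_pos_of_pos hω _
    have h3 : (0:ℝ) < (2:ℝ) ^ q := Real.rpow_pos_of_pos two_pos _
    have h4 : (0:ℝ) < (2:ℝ) ^ NN - 2 := by linarith
    positivity
  refine ⟨κ, hκ, ?_⟩
  intro u hmeas hint huq
  set Mq : ℝ := ∫ x : RN N, |u x| ^ q with hMqdef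
  have hMq0 : 0 ≤ Mq := integral_nonneg fun x => Real.rpow_nonneg (abs_nonneg _) _
  have hG0 : 0 ≤ gagliardoP N s p u :=
    integral_nonneg fun z => div_nonneg (Real.rpow_nonneg (abs_nonneg _) _)
      (Real.rpow_nonneg (norm_nonneg _) _)
  rcases hMq0.eq_or_lt with hMq | hMq
  · rw [← hMq, Real.zero_rpow (div_pos hp0 hq0).ne', mul_zero]; exact hG0
  -- main case Mq > 0
  have huqabs : Integrable (fun x : RN N => |u x| ^ q) volume := by
    have := huq.integrable_norm_rpow (ENNReal.ofReal_pos.mpr hq0).ne'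
      ENNReal.ofReal_ne_top
    simpa [Real.norm_eq_abs, ENNReal.toReal_ofReal hq0.le] using this
  have hlint : ∫⁻ y, ENNReal.ofReal (|u y| ^ q) ∂(volume : Measure (RN N))
      = ENNReal.ofReal Mq :=
    (ofReal_integral_eq_lintegral_ofReal huqabs
      (Filter.Eventually.of_forall fun x => Real.rpow_nonneg (abs_nonneg _) _)).symm
  have haemq : AEMeasurable (fun y : RN N => ENNReal.ofReal (|u y| ^ q)) volume := by
    have hc : Continuous fun t : ℝ => ENNReal.ofReal (|t| ^ q) :=
      ENNReal.continuous_ofReal.comp (continuous_abs.rpow_const fun x => Or.inr hq0.le)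
    exact (hc.comp_aestronglyMeasurable hmeas).aemeasurable
  -- pointwise lower bound for the inner integral
  have hpt : ∀ x : RN N, ENNReal.ofReal (κ * Mq ^ (-(s*p/NN)) * |u x| ^ q) ≤
      ∫⁻ y, ENNReal.ofReal (|u x - u y| ^ p / ‖x - y‖ ^ (NN + s * p)) ∂volume := by
    intro x
    rcases (abs_nonneg (u x)).eq_or_lt with ht0 | ht
    · rw [← ht0, Real.zero_rpow hq0.ne', mul_zero, ENNReal.ofReal_zero]
      exact zero_le
    set t : ℝ := |u x| with htdef
    set S : ℝ := t / 2 with hSdef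
    have hS : 0 < S := by rw [hSdef]; linarith
    have hSq : (0:ℝ) < S ^ q := Real.rpow_pos_of_pos hS q
    set m : ℝ := Mq / S ^ q with hmdef
    have hm : 0 < m := div_pos hMq hSq
    set ρ : ℝ := (m / ω) ^ NN⁻¹ with hρdef
    have hρ : 0 < ρ := Real.rpow_pos_of_pos (div_pos hm hω) _
    -- Chebyshev
    have cheb : volume {y : RN N | S < |u y|} ≤ ENNReal.ofReal m := by
      have h1 : {y : RN N | S < |u y|} ⊆
          {y : RN N | ENNReal.ofReal (S ^ q) ≤ ENNReal.ofReal (|u y| ^ q)} := by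
        intro y hy
        exact ENNReal.ofReal_le_ofReal
          (Real.rpow_le_rpow hS.le (le_of_lt hy) hq0.le)
      have h2 := mul_meas_ge_le_lintegral₀ haemq (ENNReal.ofReal (S ^ q))
      have h3 : volume {y : RN N | S < |u y|} ≤
          ENNReal.ofReal Mq / ENNReal.ofReal (S ^ q) := by
        rw [ENNReal.le_div_iff_mul_le
          (Or.inl (ENNReal.ofReal_pos.mpr hSq).ne') (Or.inl ENNReal.ofReal_ne_top)]
        calc volume {y : RN N | S < |u y|} * ENNReal.ofReal (S ^ q)
            ≤ volume {y : RN N | ENNReal.ofReal (S ^ q) ≤ ENNReal.ofReal (|u y| ^ q)} *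
              ENNReal.ofReal (S ^ q) := mul_le_mul_left (measure_mono h1) _
          _ = ENNReal.ofReal (S ^ q) *
              volume {y : RN N | ENNReal.ofReal (S ^ q) ≤ ENNReal.ofReal (|u y| ^ q)} :=
              mul_comm _ _
          _ ≤ ∫⁻ y, ENNReal.ofReal (|u y| ^ q) ∂volume := h2
          _ = ENNReal.ofReal Mq := hlint
      rwa [← ENNReal.ofReal_div_of_pos hSq, ← hmdef] at h3
    set Sm : Set (RN N) := toMeasurable volume {y : RN N | S < |u y|} with hSmdef
    have hSm_meas : MeasurableSet Sm := measurableSet_toMeasurable _ _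
    have hSmv : volume Sm ≤ ENNReal.ofReal m := by
      rw [hSmdef, measure_toMeasurable]; exact cheb
    set T : Set (RN N) := (ball x (2*ρ) \ ball x ρ) \ Sm with hTdef
    have hT_meas : MeasurableSet T :=
      (measurableSet_ball.diff measurableSet_ball).diff hSm_meas
    -- ball measures
    have hρN : (ρ : ℝ) ^ (N : ℕ) = m / ω := by
      rw [← Real.rpow_natCast ρ N, hρdef, ← Real.rpow_mul (div_pos hm hω).le,
        inv_mul_cancel₀ hN0.ne', Real.rpow_one]
    have hballρ : volume (ball x ρ) = ENNReal.ofReal m := by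
      rw [Measure.addHaar_ball volume x hρ.le, hωeq, finrank_euclideanSpace_fin, hρN,
        ← ENNReal.ofReal_mul (by positivity), div_mul_cancel₀ _ hω.ne']
    have hball2ρ : volume (ball x (2*ρ)) = ENNReal.ofReal ((2:ℝ) ^ NN * m) := by
      rw [Measure.addHaar_ball volume x (by positivity), hωeq, finrank_euclideanSpace_fin]
      rw [mul_pow, hρN, ← ENNReal.ofReal_mul (by positivity)]
      congr 1
      rw [← Real.rpow_natCast (2:ℝ) N, mul_assoc, div_mul_cancel₀ _ hω.ne']
    have hannulus : volume (ball x (2*ρ) \ ball x ρ)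
        = ENNReal.ofReal ((2:ℝ) ^ NN * m - m) := by
      rw [measure_diff (ball_subset_ball (by linarith)) measurableSet_ball.nullMeasurableSet
        measure_ball_lt_top.ne, hballρ, hball2ρ, ← ENNReal.ofReal_sub _ hm.le]
    have hTμ : ENNReal.ofReal (((2:ℝ) ^ NN - 2) * m) ≤ volume T := by
      have hsub : (ball x (2*ρ) \ ball x ρ) ⊆ T ∪ Sm := by
        intro y hy
        by_cases h : y ∈ Sm
        · exact Or.inr h
        · exact Or.inl ⟨hy, h⟩
      have h1 : volume (ball x (2*ρ) \ ball x ρ) ≤ volume T + volume Sm :=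
        le_trans (measure_mono hsub) (measure_union_le _ _)
      have h2 : ENNReal.ofReal ((2:ℝ) ^ NN * m - m) ≤ volume T + ENNReal.ofReal m := by
        rw [← hannulus]
        exact h1.trans (add_le_add le_rfl hSmv)
      have h3 : ENNReal.ofReal (((2:ℝ) ^ NN - 2) * m)
          = ENNReal.ofReal ((2:ℝ) ^ NN * m - m) - ENNReal.ofReal m := by
        rw [← ENNReal.ofReal_sub _ hm.le]; ring_nf
      rw [h3]
      exact tsub_le_iff_right.mpr h2
    -- pointwise bound on T
    set c₆ : ℝ := S ^ p / (2*ρ) ^ (NN + s*p) with hc₆def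
    have hTpt : ∀ y ∈ T, ENNReal.ofReal c₆ ≤
        ENNReal.ofReal (|u x - u y| ^ p / ‖x - y‖ ^ (NN + s * p)) := by
      intro y hy
      obtain ⟨⟨hy2, hy1⟩, hyS⟩ := hy
      have huy : |u y| ≤ S := by
        by_contra h
        exact hyS (subset_toMeasurable _ _ (by simpa using lt_of_not_ge h))
      have hud : S ≤ |u x - u y| := by
        have h1 : |u x| - |u y| ≤ |u x - u y| := abs_sub_abs_le_abs_sub _ _
        have : t - S ≤ |u x - u y| := by
          calc t - S ≤ |u x| - |u y| := by rw [← htdef]; linarith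
            _ ≤ |u x - u y| := h1
        rw [hSdef] at *; linarith
      have hxy1 : ρ ≤ ‖x - y‖ := by
        rw [← dist_eq_norm, dist_comm]
        exact le_of_not_gt fun h => hy1 (mem_ball.mpr h)
      have hxy2 : ‖x - y‖ ≤ 2*ρ := by
        rw [← dist_eq_norm, dist_comm]
        exact le_of_lt (mem_ball.mp hy2)
      apply ENNReal.ofReal_le_ofReal
      rw [hc₆def]
      apply div_le_div₀ (Real.rpow_nonneg (abs_nonneg _) _)
        (Real.rpow_le_rpow hS.le hud hp0.le)
        (Real.rpow_pos_of_pos (lt_of_lt_of_le hρ hxy1) _)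
        (Real.rpow_le_rpow (norm_nonneg _) hxy2 (by positivity))
    -- combine
    have key : ENNReal.ofReal c₆ * ENNReal.ofReal (((2:ℝ) ^ NN - 2) * m) ≤
        ∫⁻ y, ENNReal.ofReal (|u x - u y| ^ p / ‖x - y‖ ^ (NN + s * p)) ∂volume := by
      calc ENNReal.ofReal c₆ * ENNReal.ofReal (((2:ℝ) ^ NN - 2) * m)
          ≤ ENNReal.ofReal c₆ * volume T := mul_le_mul_right hTμ _
        _ = ∫⁻ y in T, ENNReal.ofReal c₆ ∂volume := by rw [setLIntegral_const, mul_comm]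
        _ = ∫⁻ y, T.indicator (fun _ => ENNReal.ofReal c₆) y ∂volume :=
            (lintegral_indicator hT_meas _).symm
        _ ≤ ∫⁻ y, ENNReal.ofReal (|u x - u y| ^ p / ‖x - y‖ ^ (NN + s * p)) ∂volume := by
            apply lintegral_mono
            intro y
            by_cases hy : y ∈ T
            · rw [Set.indicator_of_mem hy]; exact hTpt y hy
            · rw [Set.indicator_of_notMem hy]; exact zero_le
    have harith : c₆ * (((2:ℝ) ^ NN - 2) * m) = κ * Mq ^ (-(s*p/NN)) * t ^ q := by
      have hak := arith_key (sp := s*p) hN0 hω hMq hS hqsp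
      have hc6m : c₆ * m = 2 ^ (-(NN + s*p)) * ω ^ ((NN + s*p) / NN) *
          Mq ^ (-(s*p / NN)) * S ^ q := by
        rw [hc₆def, hmdef]
        rw [hρdef, hmdef]
        exact hak
      have hSqt : S ^ q = t ^ q * ((2:ℝ) ^ q)⁻¹ := by
        rw [hSdef, Real.div_rpow (by linarith : (0:ℝ) ≤ t) (by norm_num : (0:ℝ) ≤ 2)]
        ring
      calc c₆ * (((2:ℝ) ^ NN - 2) * m) = ((2:ℝ) ^ NN - 2) * (c₆ * m) := by ring
        _ = ((2:ℝ) ^ NN - 2) * (2 ^ (-(NN + s*p)) * ω ^ ((NN + s*p) / NN) *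
            Mq ^ (-(s*p / NN)) * (t ^ q * ((2:ℝ) ^ q)⁻¹)) := by rw [hc6m, hSqt]
        _ = κ * Mq ^ (-(s*p/NN)) * t ^ q := by rw [hκdef]; ring
    have hofr : ENNReal.ofReal c₆ * ENNReal.ofReal (((2:ℝ) ^ NN - 2) * m)
        = ENNReal.ofReal (κ * Mq ^ (-(s*p/NN)) * t ^ q) := by
      rw [← ENNReal.ofReal_mul (by rw [hc₆def]; positivity), harith]
    rw [← hofr]
    exact key
  -- integrate the pointwise bound
  have haeprod : AEMeasurable
      (fun z : RN N × RN N => ENNReal.ofReal (|u z.1 - u z.2| ^ p / ‖z.1 - z.2‖ ^ (NN + s * p)))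
      ((volume : Measure (RN N)).prod volume) := by
    rw [← Measure.volume_eq_prod]
    exact hint.aestronglyMeasurable.aemeasurable.ennreal_ofReal
  have hprod : ∫⁻ x, (∫⁻ y, ENNReal.ofReal (|u x - u y| ^ p / ‖x - y‖ ^ (NN + s * p)) ∂volume)
      ∂volume = ENNReal.ofReal (gagliardoP N s p u) := by
    rw [← lintegral_prod _ haeprod, ← Measure.volume_eq_prod, gagliardoP]
    exact (ofReal_integral_eq_lintegral_ofReal hint
      (Filter.Eventually.of_forall fun z => div_nonneg (Real.rpow_nonneg (abs_nonneg _) _)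
        (Real.rpow_nonneg (norm_nonneg _) _))).symm
  have hκ' : 0 ≤ κ * Mq ^ (-(s*p/NN)) := by positivity
  have hglob : ENNReal.ofReal (κ * Mq ^ (-(s*p/NN))) * ENNReal.ofReal Mq
      ≤ ENNReal.ofReal (gagliardoP N s p u) := by
    calc ENNReal.ofReal (κ * Mq ^ (-(s*p/NN))) * ENNReal.ofReal Mq
        = ENNReal.ofReal (κ * Mq ^ (-(s*p/NN))) * ∫⁻ y, ENNReal.ofReal (|u y| ^ q) ∂volume := by
          rw [hlint]
      _ = ∫⁻ x, ENNReal.ofReal (κ * Mq ^ (-(s*p/NN))) * ENNReal.ofReal (|u x| ^ q) ∂volume :=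
          (lintegral_const_mul' _ _ ENNReal.ofReal_ne_top).symm
      _ = ∫⁻ x, ENNReal.ofReal (κ * Mq ^ (-(s*p/NN)) * |u x| ^ q) ∂volume := by
          congr 1; funext x; rw [← ENNReal.ofReal_mul hκ']
      _ ≤ ∫⁻ x, (∫⁻ y, ENNReal.ofReal (|u x - u y| ^ p / ‖x - y‖ ^ (NN + s * p)) ∂volume)
          ∂volume := lintegral_mono hpt
      _ = ENNReal.ofReal (gagliardoP N s p u) := hprod
  have hreal : κ * Mq ^ (-(s*p/NN)) * Mq ≤ gagliardoP N s p u := by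
    rw [← ENNReal.ofReal_mul hκ'] at hglob
    exact (ENNReal.ofReal_le_ofReal_iff hG0).mp hglob
  have hfin : Mq ^ (-(s*p/NN)) * Mq = Mq ^ (p/q) := by
    nth_rewrite 2 [← Real.rpow_one Mq]
    rw [← Real.rpow_add hMq]
    congr 1
    rw [hpq']
    field_simp
    ring
  calc κ * Mq ^ (p/q) = κ * (Mq ^ (-(s*p/NN)) * Mq) := by rw [hfin]
    _ ≤ gagliardoP N s p u := by rw [← mul_assoc]; exact hreal

lemma weight_memLp (N : ℕ) (hN : 3 ≤ N) (α q' : ℝ) (hα : 0 < α) (hq' : 1 ≤ q') :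
    MemLp (weightW N α) (ENNReal.ofReal q') volume := by
  have hN0 : (0:ℝ) < N := by
    have : (3:ℝ) ≤ N := by exact_mod_cast hN
    linarith
  set A : ℝ := (N:ℝ) + α with hAdef
  have hA : 0 < A := by positivity
  have hq'0 : 0 < q' := by linarith
  have hden : ∀ x : RN N, (0:ℝ) < 1 + ‖x‖ ^ A := fun x => by positivity
  have hwcont : Continuous (weightW N α) := by
    apply Continuous.div continuous_const
    · exact continuous_const.add (continuous_norm.rpow_const fun x => Or.inr hA.le)
    · exact fun x => (hden x).ne'
  have hwnn : ∀ x : RN N, 0 ≤ weightW N α x := fun x => by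
    rw [weightW]; positivity
  set h₁ : RN N → ℝ := fun x => (1 + ‖x‖) ^ (-A) with h₁def
  have h₁nn : ∀ x, 0 ≤ h₁ x := fun x => Real.rpow_nonneg (by positivity) _
  have hkey : ∀ x : RN N, weightW N α x ≤ 2 ^ A * h₁ x := by
    intro x
    have hx1 : (0:ℝ) < 1 + ‖x‖ := by positivity
    have h1 : (1 + ‖x‖) ≤ 2 * max 1 ‖x‖ := by
      rcases le_total ‖x‖ 1 with h | h
      · have := le_max_left (1:ℝ) ‖x‖; linarith
      · have := le_max_right (1:ℝ) ‖x‖; linarith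
    have h2 : (1 + ‖x‖) ^ A ≤ (2 * max 1 ‖x‖) ^ A :=
      Real.rpow_le_rpow hx1.le h1 hA.le
    have h3 : (2 * max 1 ‖x‖) ^ A = 2 ^ A * (max 1 ‖x‖) ^ A :=
      Real.mul_rpow (by norm_num) (le_max_of_le_left zero_le_one)
    have h4 : (max 1 ‖x‖) ^ A ≤ 1 + ‖x‖ ^ A := by
      rcases le_total ‖x‖ 1 with h | h
      · rw [max_eq_left h, Real.one_rpow]
        have : 0 ≤ ‖x‖ ^ A := Real.rpow_nonneg (norm_nonneg _) _
        linarith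
      · rw [max_eq_right h]
        have : 0 ≤ (1:ℝ) := zero_le_one
        linarith
    have h5 : (1 + ‖x‖) ^ A ≤ 2 ^ A * (1 + ‖x‖ ^ A) := by
      calc (1 + ‖x‖) ^ A ≤ 2 ^ A * (max 1 ‖x‖) ^ A := by rw [← h3]; exact h2
        _ ≤ 2 ^ A * (1 + ‖x‖ ^ A) := by
            have h2A : (0:ℝ) ≤ 2 ^ A := Real.rpow_nonneg (by norm_num) _
            exact mul_le_mul_of_nonneg_left h4 h2A
    have hxA : (0:ℝ) < (1 + ‖x‖) ^ A := Real.rpow_pos_of_pos hx1 _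
    show 1 / (1 + ‖x‖ ^ A) ≤ 2 ^ A * (1 + ‖x‖) ^ (-A)
    rw [Real.rpow_neg hx1.le, div_le_iff₀ (hden x)]
    have h7 : 2 ^ A * ((1 + ‖x‖) ^ A)⁻¹ * (1 + ‖x‖ ^ A)
        = 2 ^ A * (1 + ‖x‖ ^ A) / (1 + ‖x‖) ^ A := by ring
    rw [h7, le_div_iff₀ hxA]
    linarith [h5]
  have hfr : (Module.finrank ℝ (RN N) : ℝ) < q' * A := by
    rw [finrank_euclideanSpace_fin]
    nlinarith
  have hIF : Integrable (fun x : RN N => (1 + ‖x‖) ^ (-(q' * A))) volume :=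
    integrable_one_add_norm hfr
  have h₁cont : Continuous h₁ :=
    (continuous_const.add continuous_norm).rpow_const fun x => Or.inl (by positivity : (0:ℝ) < 1 + ‖x‖).ne'
  have h₁mem : MemLp h₁ (ENNReal.ofReal q') volume := by
    have hne0 : ENNReal.ofReal q' ≠ 0 := (ENNReal.ofReal_pos.mpr hq'0).ne'
    have hnetop : ENNReal.ofReal q' ≠ ⊤ := ENNReal.ofReal_ne_top
    apply (memLp_norm_rpow_iff (q := ENNReal.ofReal q')
      h₁cont.aestronglyMeasurable hne0 hnetop).mp
    rw [ENNReal.div_self hne0 hnetop, memLp_one_iff_integrable]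
    have heq : (fun x : RN N => ‖h₁ x‖ ^ (ENNReal.ofReal q').toReal)
        = fun x : RN N => (1 + ‖x‖) ^ (-(q' * A)) := by
      funext x
      rw [ENNReal.toReal_ofReal hq'0.le, Real.norm_of_nonneg (h₁nn x), h₁def]
      rw [← Real.rpow_mul (by positivity : (0:ℝ) ≤ 1 + ‖x‖)]
      congr 1; ring
    rw [heq]; exact hIF
  exact (h₁mem.const_mul ((2:ℝ) ^ A)).of_le hwcont.aestronglyMeasurable
    (ae_of_all _ fun x => by
      rw [Real.norm_of_nonneg (hwnn x)]
      exact (hkey x).trans (le_abs_self _))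

/-- Coercivity of the regularized energy functional
`J_n(u) = (1/p)[u]_{s,p}^p − ∫ A(x, u(x)) dx`, where
`A(x,t) = ∫_0^t a(x)(τ_+ + 1/n)^{−γ} dτ`:
there are `c > 0` and `C ≥ 0` with `J_n(u) ≥ c [u]_{s,p}^p − C` on `D^{s,p}(ℝ^N)`. -/
theorem regularized_functional_coercive (N : ℕ) (hN : 3 ≤ N) (s p γ α : ℝ)
    (hs0 : 0 < s) (hs1 : s < 1) (hp : 2 ≤ p) (hpN : p < (N : ℝ) / s)
    (hγ0 : 0 < γ) (hγ1 : γ < 1)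
    (hα1 : γ * ((N : ℝ) - s * p) / (p - 1) < α)
    (hα2 : α < γ * ((N : ℝ) - s * p) / (p - 1) + s * p)
    (a : RN N → ℝ) (ha_meas : Measurable a) (c_a : ℝ) (hca : 0 < c_a)
    (ha : ∀ x, 0 ≤ a x ∧ a x ≤ c_a * weightW N α x)
    (n : ℕ) (hn : 0 < n) :
    ∃ c : ℝ, 0 < c ∧ ∃ C : ℝ, 0 ≤ C ∧ ∀ u : RN N → ℝ, DspMem N s p u →
      (1 / p) * gagliardoP N s p u -
          (∫ x : RN N, ∫ τ in (0 : ℝ)..(u x), a x * (max τ 0 + 1 / (n : ℝ)) ^ (-γ)) ≥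
        c * gagliardoP N s p u - C := by
  have hN0 : (0:ℝ) < N := by
    have : (3:ℝ) ≤ N := by exact_mod_cast hN
    linarith
  have hp0 : (0:ℝ) < p := by linarith
  have hp1 : (1:ℝ) < p := by linarith
  have hNsp : 0 < (N:ℝ) - s * p := by
    rw [lt_div_iff₀ hs0] at hpN; nlinarith
  set q : ℝ := pStar N s p with hqdef
  have hq0 : 0 < q := by rw [hqdef, pStar]; positivity
  have hpq : p < q := by rw [hqdef, pStar, lt_div_iff₀ hNsp]; nlinarith
  have hq1 : (1:ℝ) < q := by linarith
  have hconjq := Real.HolderConjugate.conjExponent hq1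
  set q' : ℝ := q / (q - 1) with hq'def
  have hconj : q'.HolderConjugate q := hconjq.symm
  have hq'1 : 1 < q' := hconj.lt
  have hα0 : 0 < α := by
    have h1 : 0 < γ * ((N:ℝ) - s * p) / (p - 1) := by
      apply div_pos (mul_pos hγ0 hNsp); linarith
    linarith
  have hwmem := weight_memLp N hN α q' hα0 hq'1.le
  obtain ⟨κ, hκ, hsob⟩ := sobolev_key N hN s p hs0 hp hpN
  set Cw : ℝ := (∫ x : RN N, weightW N α x ^ q') ^ (1/q') with hCwdef
  have hwnn : ∀ x : RN N, 0 ≤ weightW N α x := fun x => by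
    rw [weightW]; positivity
  have hCw0 : 0 ≤ Cw :=
    Real.rpow_nonneg (integral_nonneg fun x => Real.rpow_nonneg (hwnn x) _) _
  have hn0 : (0:ℝ) < (n:ℝ) := by exact_mod_cast hn
  set K : ℝ := c_a * (n:ℝ)^γ * Cw with hKdef
  have hK0 : 0 ≤ K := by positivity
  set B : ℝ := K * (κ ^ (1/p))⁻¹ with hBdef
  have hB0 : 0 ≤ B := mul_nonneg hK0 (inv_nonneg.mpr (Real.rpow_nonneg hκ.le _))
  obtain ⟨C, hC0, hyoung⟩ := young_absorb hB0 hp1 (by positivity : (0:ℝ) < 1/(2*p))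
  refine ⟨1/(2*p), by positivity, C, hC0, ?_⟩
  rintro u ⟨huq, hint⟩
  have hmeas : AEStronglyMeasurable u volume := huq.aestronglyMeasurable
  set G : ℝ := gagliardoP N s p u with hGdef
  have hG0 : 0 ≤ G := by
    rw [hGdef, gagliardoP]
    exact integral_nonneg fun z => div_nonneg (Real.rpow_nonneg (abs_nonneg _) _)
      (Real.rpow_nonneg (norm_nonneg _) _)
  set Mq : ℝ := ∫ x : RN N, |u x| ^ q with hMqdef
  have hMq0 : 0 ≤ Mq := integral_nonneg fun x => Real.rpow_nonneg (abs_nonneg _) _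
  have hsobu : κ * Mq ^ (p/q) ≤ G := hsob u hmeas hint huq
  have hbase : ∀ τ : ℝ, (0:ℝ) < max τ 0 + 1/(n:ℝ) := fun τ => by
    have : (0:ℝ) ≤ max τ 0 := le_max_right _ _
    positivity
  have hinv : ((1:ℝ)/(n:ℝ)) ^ (-γ) = (n:ℝ) ^ γ := by
    rw [one_div, Real.rpow_neg (inv_nonneg.mpr hn0.le), Real.inv_rpow hn0.le, inv_inv]
  have haux : ∀ x : RN N, ‖∫ τ in (0:ℝ)..(u x), a x * (max τ 0 + 1/(n:ℝ)) ^ (-γ)‖ ≤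
      c_a * (n:ℝ)^γ * (weightW N α x * |u x|) := by
    intro x
    have hstep : ∀ τ ∈ Set.uIoc (0:ℝ) (u x),
        ‖a x * (max τ 0 + 1/(n:ℝ)) ^ (-γ)‖ ≤ a x * (n:ℝ)^γ := by
      intro τ _
      have h1 : (0:ℝ) < 1/(n:ℝ) := by positivity
      have h2 : 1/(n:ℝ) ≤ max τ 0 + 1/(n:ℝ) := by
        have : (0:ℝ) ≤ max τ 0 := le_max_right _ _
        linarith
      have h3 : (max τ 0 + 1/(n:ℝ)) ^ (-γ) ≤ ((1:ℝ)/(n:ℝ)) ^ (-γ) :=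
        Real.rpow_le_rpow_of_nonpos h1 h2 (by linarith)
      have h4 : 0 ≤ (max τ 0 + 1/(n:ℝ)) ^ (-γ) := (Real.rpow_pos_of_pos (hbase τ) _).le
      rw [Real.norm_of_nonneg (mul_nonneg (ha x).1 h4)]
      calc a x * (max τ 0 + 1/(n:ℝ)) ^ (-γ) ≤ a x * (((1:ℝ)/(n:ℝ)) ^ (-γ)) :=
            mul_le_mul_of_nonneg_left h3 (ha x).1
        _ = a x * (n:ℝ)^γ := by rw [hinv]
    calc ‖∫ τ in (0:ℝ)..(u x), a x * (max τ 0 + 1/(n:ℝ)) ^ (-γ)‖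
        ≤ a x * (n:ℝ)^γ * |u x - 0| :=
          intervalIntegral.norm_integral_le_of_norm_le_const hstep
      _ = a x * ((n:ℝ)^γ * |u x|) := by rw [sub_zero]; ring
      _ ≤ (c_a * weightW N α x) * ((n:ℝ)^γ * |u x|) :=
          mul_le_mul_of_nonneg_right (ha x).2
            (mul_nonneg (Real.rpow_nonneg hn0.le _) (abs_nonneg _))
      _ = c_a * (n:ℝ)^γ * (weightW N α x * |u x|) := by ring
  have huqn : MemLp (fun x : RN N => |u x|) (ENNReal.ofReal q) volume := by
    simpa [Real.norm_eq_abs] using huq.norm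
  have hwu_int : Integrable (fun x : RN N => weightW N α x * |u x|) volume := by
    have hpqr : (1 : ENNReal)/1 = 1/ENNReal.ofReal q' + 1/ENNReal.ofReal q := by
      simp only [one_div, inv_one]
      exact hconj.inv_add_inv_ennreal.symm
    have := memLp_one_iff_integrable.mp (haveI := hconj.ennrealOfReal; MemLp.smul huqn hwmem)
    simpa [smul_eq_mul, Pi.mul_def] using this
  have hholder : (∫ x : RN N, weightW N α x * |u x|) ≤ Cw * Mq ^ (1/q) := by
    have h := integral_mul_le_Lp_mul_Lq_of_nonneg hconj (ae_of_all _ hwnn)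
      (ae_of_all _ fun x => abs_nonneg (u x)) hwmem huqn
    rw [← hMqdef, ← hCwdef] at h
    exact h
  set F : ℝ → ℝ := fun t => ∫ τ in (0:ℝ)..t, (max τ 0 + 1/(n:ℝ)) ^ (-γ) with hFdef
  have hcg : Continuous fun τ : ℝ => (max τ 0 + 1/(n:ℝ)) ^ (-γ) := by
    apply Continuous.rpow_const
    · exact (continuous_id.max continuous_const).add continuous_const
    · exact fun τ => Or.inl (hbase τ).ne'
  have hFcont : Continuous F :=
    intervalIntegral.continuous_primitive (fun a b => hcg.intervalIntegrable a b) 0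
  have hgeq : (fun x : RN N => ∫ τ in (0:ℝ)..(u x), a x * (max τ 0 + 1/(n:ℝ)) ^ (-γ))
      = fun x => a x * F (u x) := by
    funext x
    rw [hFdef]
    exact intervalIntegral.integral_const_mul _ _
  have hgaesm : AEStronglyMeasurable
      (fun x : RN N => ∫ τ in (0:ℝ)..(u x), a x * (max τ 0 + 1/(n:ℝ)) ^ (-γ)) volume := by
    rw [hgeq]
    exact ha_meas.aestronglyMeasurable.mul (hFcont.comp_aestronglyMeasurable hmeas)
  have hh_int : Integrable (fun x : RN N => c_a * (n:ℝ)^γ * (weightW N α x * |u x|)) volume :=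
    hwu_int.const_mul _
  have hg_int : Integrable
      (fun x : RN N => ∫ τ in (0:ℝ)..(u x), a x * (max τ 0 + 1/(n:ℝ)) ^ (-γ)) volume :=
    hh_int.mono' hgaesm (ae_of_all _ haux)
  have hgle : (∫ x : RN N, ∫ τ in (0:ℝ)..(u x), a x * (max τ 0 + 1/(n:ℝ)) ^ (-γ))
      ≤ K * Mq ^ (1/q) := by
    have h1 : (∫ x : RN N, ∫ τ in (0:ℝ)..(u x), a x * (max τ 0 + 1/(n:ℝ)) ^ (-γ)) ≤
        ∫ x : RN N, c_a * (n:ℝ)^γ * (weightW N α x * |u x|) := by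
      apply integral_mono_ae hg_int hh_int
      apply ae_of_all
      intro x
      have hx := haux x
      rw [Real.norm_eq_abs] at hx
      exact le_trans (le_abs_self _) hx
    calc (∫ x : RN N, ∫ τ in (0:ℝ)..(u x), a x * (max τ 0 + 1/(n:ℝ)) ^ (-γ))
        ≤ ∫ x : RN N, c_a * (n:ℝ)^γ * (weightW N α x * |u x|) := h1
      _ = c_a * (n:ℝ)^γ * ∫ x : RN N, weightW N α x * |u x| := integral_const_mul _ _
      _ ≤ c_a * (n:ℝ)^γ * (Cw * Mq ^ (1/q)) :=
          mul_le_mul_of_nonneg_left hholder (by positivity)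
      _ = K * Mq ^ (1/q) := by rw [hKdef]; ring
  have hMql : Mq ^ (1/q) ≤ G ^ (1/p) * (κ ^ (1/p))⁻¹ := by
    have h1 : Mq ^ (p/q) ≤ G / κ := by
      rw [le_div_iff₀ hκ, mul_comm]
      exact hsobu
    have h2 : (Mq ^ (p/q)) ^ (1/p) ≤ (G/κ) ^ (1/p) :=
      Real.rpow_le_rpow (Real.rpow_nonneg hMq0 _) h1 (by positivity)
    have h3 : (Mq ^ (p/q)) ^ (1/p) = Mq ^ (1/q) := by
      rw [← Real.rpow_mul hMq0]
      congr 1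
      field_simp
    have h4 : (G/κ) ^ (1/p) = G ^ (1/p) * (κ ^ (1/p))⁻¹ := by
      rw [Real.div_rpow hG0 hκ.le, div_eq_mul_inv]
    rw [h3, h4] at h2
    exact h2
  have hfin : (∫ x : RN N, ∫ τ in (0:ℝ)..(u x), a x * (max τ 0 + 1/(n:ℝ)) ^ (-γ))
      ≤ 1/(2*p) * G + C := by
    calc (∫ x : RN N, ∫ τ in (0:ℝ)..(u x), a x * (max τ 0 + 1/(n:ℝ)) ^ (-γ))
        ≤ K * Mq ^ (1/q) := hgle
      _ ≤ K * (G ^ (1/p) * (κ ^ (1/p))⁻¹) := mul_le_mul_of_nonneg_left hMql hK0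
      _ = B * G ^ (1/p) := by rw [hBdef]; ring
      _ ≤ 1/(2*p) * G + C := hyoung G hG0
  have hhalf : (1:ℝ)/p - 1/(2*p) = 1/(2*p) := by
    field_simp
    ring
  have hmul : (1/p) * G - 1/(2*p) * G = 1/(2*p) * G := by
    rw [← sub_mul, hhalf]
  rw [ge_iff_le]
  linarith [hfin, hmul]
end
end

section
/- Let p ≥ 2 be a real number. For all real numbers a, b one has |a−b|^{p−2}(a−b)(a_+ − b_+) ≥ |a_+ − b_+|^p and −|a−b|^{p−2}(a−b)(a_− − b_−) ≥ |a_− − b_−|^p. -/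
private lemma aux_sq (a b : ℝ) :
    |max a 0 - max b 0| ≤ |a - b| ∧
    (max a 0 - max b 0) ^ 2 ≤ (a - b) * (max a 0 - max b 0) := by
  constructor
  · exact abs_max_sub_max_le_abs a b 0
  · rcases le_total a 0 with ha | ha <;> rcases le_total b 0 with hb | hb <;>
      simp [max_eq_left, max_eq_right, ha, hb] <;> nlinarith

private lemma aux_main (p : ℝ) (hp : 2 ≤ p) (u v : ℝ)
    (h1 : |v| ≤ |u|) (h2 : v ^ 2 ≤ u * v) :
    |v| ^ p ≤ |u| ^ (p - 2) * u * v := by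
  rcases eq_or_ne v 0 with rfl | hv
  · simp [Real.zero_rpow (by linarith : p ≠ 0)]
  · have hvpos : 0 < |v| := abs_pos.mpr hv
    have h3 : |v| ^ (p - 2) ≤ |u| ^ (p - 2) :=
      Real.rpow_le_rpow (abs_nonneg v) h1 (by linarith)
    have h4 : |v| ^ p = |v| ^ (p - 2) * v ^ 2 := by
      have e : |v| ^ p = |v| ^ (p - 2) * |v| ^ (2 : ℝ) := by
        rw [← Real.rpow_add hvpos]; ring_nf
      rw [e, Real.rpow_two, sq_abs]
    rw [h4, mul_assoc]
    calc |v| ^ (p - 2) * v ^ 2 ≤ |u| ^ (p - 2) * v ^ 2 := by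
          apply mul_le_mul_of_nonneg_right h3 (sq_nonneg v)
      _ ≤ |u| ^ (p - 2) * (u * v) := by
          apply mul_le_mul_of_nonneg_left h2 (Real.rpow_nonneg (abs_nonneg u) _)

/-- For `p ≥ 2` and all reals `a, b`:
`|a−b|^{p−2}(a−b)(a_+ − b_+) ≥ |a_+ − b_+|^p` and
`−|a−b|^{p−2}(a−b)(a_− − b_−) ≥ |a_− − b_−|^p`,
where `t_+ = max t 0` and `t_− = max (−t) 0`. -/
theorem odd_power_positive_negative_parts (p : ℝ) (hp : 2 ≤ p) (a b : ℝ) :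
    |a - b| ^ (p - 2) * (a - b) * (max a 0 - max b 0) ≥ |max a 0 - max b 0| ^ p ∧
    -(|a - b| ^ (p - 2) * (a - b) * (max (-a) 0 - max (-b) 0)) ≥
      |max (-a) 0 - max (-b) 0| ^ p := by
  constructor
  · exact aux_main p hp _ _ (aux_sq a b).1 (aux_sq a b).2
  · have h := aux_main p hp (-a - -b) (max (-a) 0 - max (-b) 0)
      (aux_sq (-a) (-b)).1 (aux_sq (-a) (-b)).2
    have e1 : |-a - -b| = |a - b| := by rw [abs_sub_comm]; ring_nf
    have e2 : (-a - -b) = -(a - b) := by ring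
    rw [e1, e2] at h
    linarith [h]
end

section
/- Let N ≥ 3, 0 < s < 1, and 2 ≤ p < N/s. Let v, w ∈ D^{s,p}(ℝ^N) be such that ⟨(−Δ_p)^s w, φ⟩ ≤ ⟨(−Δ_p)^s v, φ⟩ for every φ ∈ D^{s,p}(ℝ^N) with φ ≥ 0 a.e. and φ = 0 a.e. on the set {x : w(x) ≤ v(x)}. Then w ≤ v almost everywhere in ℝ^N. -/
open MeasureTheory Metric

noncomputable section

private lemma rpow_mul_self_lt {q x y : ℝ} (hq : 0 ≤ q) (hx : 0 ≤ x) (hxy : x < y) :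
    x ^ q * x < y ^ q * y := by
  have hy : 0 < y := hx.trans_lt hxy
  rcases eq_or_lt_of_le hx with h0 | h0
  · rw [← h0, mul_zero]
    positivity
  · rw [← Real.rpow_add_one h0.ne' q, ← Real.rpow_add_one hy.ne' q]
    exact Real.rpow_lt_rpow hx hxy (by linarith)

private lemma Jp_strictMono {q : ℝ} (hq : 0 ≤ q) :
    StrictMono (fun t : ℝ => |t| ^ q * t) := by
  intro a b hab
  simp only
  rcases le_or_gt 0 a with ha | ha
  · rw [abs_of_nonneg ha, abs_of_nonneg (ha.trans hab.le)]
    exact rpow_mul_self_lt hq ha hab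
  · rcases le_or_gt 0 b with hb | hb
    · have h1 : |a| ^ q * a < 0 :=
        mul_neg_of_pos_of_neg (Real.rpow_pos_of_pos (abs_pos.mpr ha.ne) q) ha
      have h2 : 0 ≤ |b| ^ q * b := mul_nonneg (Real.rpow_nonneg (abs_nonneg b) q) hb
      linarith
    · rw [abs_of_neg ha, abs_of_neg hb]
      have h := rpow_mul_self_lt hq (neg_nonneg.mpr hb.le) (by linarith : -b < -a)
      rw [mul_neg, mul_neg] at h
      linarith

private lemma max_lt_max_zero {a b : ℝ} (h : max a 0 < max b 0) : a < b := by
  have hb : 0 < max b 0 := lt_of_le_of_lt (le_max_right a 0) h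
  have hb' : max b 0 = b := by
    rcases le_total b 0 with hb0 | hb0
    · rw [max_eq_right hb0] at hb; linarith
    · exact max_eq_left hb0
  calc a ≤ max a 0 := le_max_left _ _
    _ < max b 0 := h
    _ = b := hb'

private lemma rpow_sub_one_mul {t e : ℝ} (ht : 0 ≤ t) (he : e ≠ 0) :
    t ^ (e - 1) * t = t ^ e := by
  rcases eq_or_lt_of_le ht with h0 | h0
  · rw [← h0, Real.zero_rpow he, mul_zero]
  · rw [← Real.rpow_add_one h0.ne' (e - 1), sub_add_cancel]

private lemma key_sign {q W V a b : ℝ} (hq : 0 ≤ q) (hWV : W - V = a - b) :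
    0 ≤ (|W| ^ q * W - |V| ^ q * V) * (max a 0 - max b 0) ∧
      ((|W| ^ q * W - |V| ^ q * V) * (max a 0 - max b 0) = 0 → max a 0 = max b 0) := by
  have JSM : StrictMono (fun t : ℝ => |t| ^ q * t) := Jp_strictMono hq
  rcases lt_trichotomy (max a 0) (max b 0) with hc | hc | hc
  · have hab : a < b := max_lt_max_zero hc
    have hJ : |W| ^ q * W < |V| ^ q * V := JSM (by linarith : W < V)
    constructor
    · have h2 := mul_nonneg (neg_nonneg.mpr (by linarith : |W| ^ q * W - |V| ^ q * V ≤ 0))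
        (neg_nonneg.mpr (by linarith : max a 0 - max b 0 ≤ 0))
      rw [neg_mul_neg] at h2
      exact h2
    · intro h0
      have hpos : 0 < (-(|W| ^ q * W - |V| ^ q * V)) * (-(max a 0 - max b 0)) :=
        mul_pos (by linarith) (by linarith)
      rw [neg_mul_neg] at hpos
      exact absurd h0 (ne_of_gt hpos)
  · simp [hc]
  · have hab : b < a := max_lt_max_zero hc
    have hJ : |V| ^ q * V < |W| ^ q * W := JSM (by linarith : V < W)
    constructor
    · exact mul_nonneg (by linarith) (by linarith)
    · intro h0
      exact absurd h0 (ne_of_gt (mul_pos (by linarith) (by linarith)))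

set_option maxHeartbeats 1000000 in
/-- If `v, w ∈ D^{s,p}(ℝ^N)` and `⟨(−Δ_p)^s w, φ⟩ ≤ ⟨(−Δ_p)^s v, φ⟩` for every
non-negative `φ ∈ D^{s,p}(ℝ^N)` vanishing a.e. on `{w ≤ v}`, then `w ≤ v` a.e. -/
theorem comparison_via_test_functions (N : ℕ) (hN : 3 ≤ N) (s p : ℝ)
    (hs0 : 0 < s) (hs1 : s < 1) (hp : 2 ≤ p) (hpN : p < (N : ℝ) / s)
    (v w : RN N → ℝ) (hv : DspMem N s p v) (hw : DspMem N s p w)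
    (h : ∀ φ : RN N → ℝ, DspMem N s p φ →
      (∀ᵐ x ∂(volume : Measure (RN N)), 0 ≤ φ x) →
      (∀ᵐ x ∂(volume : Measure (RN N)), w x ≤ v x → φ x = 0) →
      fracPair N s p w φ ≤ fracPair N s p v φ) :
    ∀ᵐ x ∂(volume : Measure (RN N)), w x ≤ v x := by
  classical
  obtain ⟨hwm, hwI⟩ := hw
  obtain ⟨hvm, hvI⟩ := hv
  haveI : Nonempty (Fin N) := ⟨⟨0, by omega⟩⟩
  haveI : Nontrivial (RN N) := inferInstance
  have hp0 : (0:ℝ) < p := by linarith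
  have hp1 : (0:ℝ) ≤ p - 1 := by linarith
  have hq : (0:ℝ) ≤ p - 2 := by linarith
  have hN0 : (0:ℝ) < (N:ℝ) := by
    have : (3:ℝ) ≤ (N:ℝ) := by exact_mod_cast hN
    linarith
  have hsp : s * p < (N:ℝ) := by
    have h1 := (lt_div_iff₀ hs0).mp hpN
    linarith [h1]
  have hpstar : 0 < pStar N s p := div_pos (by positivity) (by linarith)
  set φ : RN N → ℝ := fun x => max (w x - v x) 0 with hφdef
  have aW := hwm.1
  have aV := hvm.1
  have aφ : AEStronglyMeasurable φ (volume : Measure (RN N)) :=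
    ((aW.sub aV).aemeasurable.max aemeasurable_const).aestronglyMeasurable
  -- measurability on the product space
  have prodAEM : ∀ f : RN N → ℝ, AEStronglyMeasurable f (volume : Measure (RN N)) →
      AEMeasurable (fun z : RN N × RN N => f z.1 - f z.2)
        (volume : Measure (RN N × RN N)) := by
    intro f hf
    rw [Measure.volume_eq_prod]
    exact (hf.comp_fst.sub hf.comp_snd).aemeasurable
  have hAw : AEMeasurable (fun z : RN N × RN N => w z.1 - w z.2) volume := prodAEM w aW
  have hAv : AEMeasurable (fun z : RN N × RN N => v z.1 - v z.2) volume := prodAEM v aV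
  have hAφ : AEMeasurable (fun z : RN N × RN N => φ z.1 - φ z.2) volume := prodAEM φ aφ
  have hKnn : ∀ z : RN N × RN N, 0 ≤ ‖z.1 - z.2‖ ^ ((N:ℝ) + s * p) :=
    fun z => Real.rpow_nonneg (norm_nonneg _) _
  have hdivK : ∀ (a b : ℝ) (z : RN N × RN N), a ≤ b →
      a / ‖z.1 - z.2‖ ^ ((N:ℝ) + s * p) ≤ b / ‖z.1 - z.2‖ ^ ((N:ℝ) + s * p) := by
    intro a b z hab
    rcases (hKnn z).eq_or_lt with hk | hk
    · rw [← hk, div_zero, div_zero]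
    · exact (div_le_div_iff_of_pos_right hk).mpr hab
  -- diagonal has measure zero
  have hDiag : (volume : Measure (RN N × RN N)) {z : RN N × RN N | z.1 = z.2} = 0 := by
    rw [Measure.volume_eq_prod,
      Measure.prod_apply (measurableSet_eq_fun measurable_fst measurable_snd)]
    have hsing : ∀ x : RN N, (Prod.mk x ⁻¹' {z : RN N × RN N | z.1 = z.2}) = {x} := by
      intro x; ext y; simp [eq_comm]
    simp [hsing, measure_singleton]
  have hne : ∀ᵐ z : RN N × RN N ∂volume, z.1 ≠ z.2 := by
    rw [ae_iff]
    simpa using hDiag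
  have hKpos : ∀ᵐ z : RN N × RN N ∂volume, 0 < ‖z.1 - z.2‖ ^ ((N:ℝ) + s * p) :=
    hne.mono fun z hz => Real.rpow_pos_of_pos (norm_pos_iff.mpr (sub_ne_zero.mpr hz)) _
  -- the Gagliardo integrand of φ is integrable
  have hGφm : AEStronglyMeasurable (fun z : RN N × RN N =>
      |φ z.1 - φ z.2| ^ p / ‖z.1 - z.2‖ ^ ((N:ℝ) + s * p)) volume := by
    have : AEMeasurable (fun z : RN N × RN N =>
        |φ z.1 - φ z.2| ^ p / ‖z.1 - z.2‖ ^ ((N:ℝ) + s * p)) volume := by fun_prop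
    exact this.aestronglyMeasurable
  have hGφ_int : Integrable (fun z : RN N × RN N =>
      |φ z.1 - φ z.2| ^ p / ‖z.1 - z.2‖ ^ ((N:ℝ) + s * p)) volume := by
    refine ((hwI.add hvI).const_mul ((2:ℝ) ^ p)).mono' hGφm (ae_of_all _ fun z => ?_)
    have h1 : |φ z.1 - φ z.2| ≤ |w z.1 - w z.2| + |v z.1 - v z.2| := by
      refine (abs_max_sub_max_le_abs (w z.1 - v z.1) (w z.2 - v z.2) 0).trans ?_
      have e : w z.1 - v z.1 - (w z.2 - v z.2) = (w z.1 - w z.2) - (v z.1 - v z.2) := by ring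
      rw [e]
      exact abs_sub _ _
    set A := |w z.1 - w z.2| with hA
    set B := |v z.1 - v z.2| with hB
    have hA0 : 0 ≤ A := abs_nonneg _
    have hB0 : 0 ≤ B := abs_nonneg _
    have h2 : |φ z.1 - φ z.2| ^ p ≤ (A + B) ^ p :=
      Real.rpow_le_rpow (abs_nonneg _) h1 hp0.le
    have h3 : (A + B) ^ p ≤ 2 ^ p * (A ^ p + B ^ p) := by
      have hm : A + B ≤ 2 * max A B := by
        rcases le_total A B with hAB | hAB
        · rw [max_eq_right hAB]; linarith
        · rw [max_eq_left hAB]; linarith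
      have h4 : (A + B) ^ p ≤ (2 * max A B) ^ p :=
        Real.rpow_le_rpow (by positivity) hm hp0.le
      have h5 : ((2 : ℝ) * max A B) ^ p = 2 ^ p * (max A B) ^ p :=
        Real.mul_rpow (by norm_num) (le_max_of_le_left hA0)
      have h6 : (max A B) ^ p ≤ A ^ p + B ^ p := by
        rcases le_total A B with hAB | hAB
        · rw [max_eq_right hAB]
          have := Real.rpow_nonneg hA0 p
          linarith
        · rw [max_eq_left hAB]
          have := Real.rpow_nonneg hB0 p
          linarith
      have h2p : (0:ℝ) ≤ 2 ^ p := Real.rpow_nonneg (by norm_num) p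
      calc (A + B) ^ p ≤ 2 ^ p * (max A B) ^ p := by rw [← h5]; exact h4
        _ ≤ 2 ^ p * (A ^ p + B ^ p) := mul_le_mul_of_nonneg_left h6 h2p
    rw [Real.norm_eq_abs,
      abs_of_nonneg (div_nonneg (Real.rpow_nonneg (abs_nonneg _) _) (hKnn z))]
    calc |φ z.1 - φ z.2| ^ p / ‖z.1 - z.2‖ ^ ((N:ℝ) + s * p)
        ≤ (2 ^ p * (A ^ p + B ^ p)) / ‖z.1 - z.2‖ ^ ((N:ℝ) + s * p) :=
          hdivK _ _ z (h2.trans h3)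
      _ = 2 ^ p * (A ^ p / ‖z.1 - z.2‖ ^ ((N:ℝ) + s * p)
            + B ^ p / ‖z.1 - z.2‖ ^ ((N:ℝ) + s * p)) := by ring
  -- φ ∈ L^{p*}
  have hφmem : MemLp φ (ENNReal.ofReal (pStar N s p)) volume := by
    refine MemLp.of_le (hwm.sub hvm) aφ (ae_of_all _ fun x => ?_)
    rw [Real.norm_eq_abs, Real.norm_eq_abs]
    have h1 : max (w x - v x) 0 ≤ |w x - v x| := max_le (le_abs_self _) (abs_nonneg _)
    have h2 : |φ x| = max (w x - v x) 0 := abs_of_nonneg (le_max_right _ _)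
    rw [h2]
    exact h1
  -- apply the hypothesis to φ
  have hφnn : ∀ᵐ x ∂(volume : Measure (RN N)), 0 ≤ φ x :=
    ae_of_all _ fun x => le_max_right _ _
  have hφvan : ∀ᵐ x ∂(volume : Measure (RN N)), w x ≤ v x → φ x = 0 :=
    ae_of_all _ fun x hx => max_eq_right (by linarith)
  have hineq := h φ ⟨hφmem, hGφ_int⟩ hφnn hφvan
  unfold fracPair at hineq
  -- integrability of both pairing integrands
  have hpair : ∀ f : RN N → ℝ,
      AEMeasurable (fun z : RN N × RN N => f z.1 - f z.2) volume →
      Integrable (fun z : RN N × RN N =>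
        |f z.1 - f z.2| ^ p / ‖z.1 - z.2‖ ^ ((N:ℝ) + s * p)) volume →
      Integrable (fun z : RN N × RN N =>
        |f z.1 - f z.2| ^ (p - 2) * (f z.1 - f z.2) * (φ z.1 - φ z.2) /
          ‖z.1 - z.2‖ ^ ((N:ℝ) + s * p)) volume := by
    intro f hfm hfI
    have hm : AEStronglyMeasurable (fun z : RN N × RN N =>
        |f z.1 - f z.2| ^ (p - 2) * (f z.1 - f z.2) * (φ z.1 - φ z.2) /
          ‖z.1 - z.2‖ ^ ((N:ℝ) + s * p)) volume := by
      have : AEMeasurable (fun z : RN N × RN N =>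
          |f z.1 - f z.2| ^ (p - 2) * (f z.1 - f z.2) * (φ z.1 - φ z.2) /
            ‖z.1 - z.2‖ ^ ((N:ℝ) + s * p)) volume := by fun_prop
      exact this.aestronglyMeasurable
    refine (hfI.add hGφ_int).mono' hm (ae_of_all _ fun z => ?_)
    set U := f z.1 - f z.2 with hU
    set Φ := φ z.1 - φ z.2 with hΦ
    have habs : |(|U| ^ (p - 2) * U * Φ)| = |U| ^ (p - 2) * |U| * |Φ| := by
      rw [abs_mul, abs_mul, abs_of_nonneg (Real.rpow_nonneg (abs_nonneg _) _)]
    have hU1 : |U| ^ (p - 2) * |U| = |U| ^ (p - 1) := by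
      have e : p - 2 = (p - 1) - 1 := by ring
      rw [e]
      exact rpow_sub_one_mul (abs_nonneg _) (by linarith)
    set M := max |U| |Φ| with hM
    have hMnn : 0 ≤ M := le_trans (abs_nonneg U) (le_max_left _ _)
    have h2 : |U| ^ (p - 1) * |Φ| ≤ M ^ (p - 1) * M :=
      mul_le_mul (Real.rpow_le_rpow (abs_nonneg _) (le_max_left _ _) hp1)
        (le_max_right _ _) (abs_nonneg _) (Real.rpow_nonneg hMnn _)
    have h3 : M ^ (p - 1) * M = M ^ p := rpow_sub_one_mul hMnn (ne_of_gt hp0)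
    have h4 : M ^ p ≤ |U| ^ p + |Φ| ^ p := by
      rcases le_total |U| |Φ| with hc | hc
      · rw [hM, max_eq_right hc]
        have := Real.rpow_nonneg (abs_nonneg U) p
        linarith
      · rw [hM, max_eq_left hc]
        have := Real.rpow_nonneg (abs_nonneg Φ) p
        linarith
    have h5 : |U| ^ (p - 1) * |Φ| ≤ |U| ^ p + |Φ| ^ p := h2.trans (by rw [h3]; exact h4)
    rw [Real.norm_eq_abs, abs_div, abs_of_nonneg (hKnn z), habs, hU1]
    calc |U| ^ (p - 1) * |Φ| / ‖z.1 - z.2‖ ^ ((N:ℝ) + s * p)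
        ≤ (|U| ^ p + |Φ| ^ p) / ‖z.1 - z.2‖ ^ ((N:ℝ) + s * p) := hdivK _ _ z h5
      _ = |U| ^ p / ‖z.1 - z.2‖ ^ ((N:ℝ) + s * p)
            + |Φ| ^ p / ‖z.1 - z.2‖ ^ ((N:ℝ) + s * p) := add_div _ _ _
  have hIW := hpair w hAw hwI
  have hIV := hpair v hAv hvI
  -- key pointwise sign facts
  have hkey : ∀ z : RN N × RN N,
      0 ≤ (|w z.1 - w z.2| ^ (p - 2) * (w z.1 - w z.2)
            - |v z.1 - v z.2| ^ (p - 2) * (v z.1 - v z.2)) * (φ z.1 - φ z.2) ∧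
      ((|w z.1 - w z.2| ^ (p - 2) * (w z.1 - w z.2)
            - |v z.1 - v z.2| ^ (p - 2) * (v z.1 - v z.2)) * (φ z.1 - φ z.2) = 0 →
        φ z.1 = φ z.2) := by
    intro z
    have hks := key_sign (q := p - 2) hq (W := w z.1 - w z.2) (V := v z.1 - v z.2)
      (a := w z.1 - v z.1) (b := w z.2 - v z.2) (by ring)
    simpa [hφdef] using hks
  -- the difference of the two pairing integrands is a.e. nonneg with zero integral
  have hsub_nonneg : ∀ z : RN N × RN N, 0 ≤
      |w z.1 - w z.2| ^ (p - 2) * (w z.1 - w z.2) * (φ z.1 - φ z.2) /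
        ‖z.1 - z.2‖ ^ ((N:ℝ) + s * p)
      - |v z.1 - v z.2| ^ (p - 2) * (v z.1 - v z.2) * (φ z.1 - φ z.2) /
        ‖z.1 - z.2‖ ^ ((N:ℝ) + s * p) := by
    intro z
    have e : |w z.1 - w z.2| ^ (p - 2) * (w z.1 - w z.2) * (φ z.1 - φ z.2) /
        ‖z.1 - z.2‖ ^ ((N:ℝ) + s * p)
      - |v z.1 - v z.2| ^ (p - 2) * (v z.1 - v z.2) * (φ z.1 - φ z.2) /
        ‖z.1 - z.2‖ ^ ((N:ℝ) + s * p)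
      = ((|w z.1 - w z.2| ^ (p - 2) * (w z.1 - w z.2)
            - |v z.1 - v z.2| ^ (p - 2) * (v z.1 - v z.2)) * (φ z.1 - φ z.2)) /
          ‖z.1 - z.2‖ ^ ((N:ℝ) + s * p) := by ring
    rw [e]
    exact div_nonneg (hkey z).1 (hKnn z)
  have hdiff_int : Integrable (fun z : RN N × RN N =>
      |w z.1 - w z.2| ^ (p - 2) * (w z.1 - w z.2) * (φ z.1 - φ z.2) /
        ‖z.1 - z.2‖ ^ ((N:ℝ) + s * p)
      - |v z.1 - v z.2| ^ (p - 2) * (v z.1 - v z.2) * (φ z.1 - φ z.2) /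
        ‖z.1 - z.2‖ ^ ((N:ℝ) + s * p)) volume := hIW.sub hIV
  have hint0 : (∫ z : RN N × RN N,
      (|w z.1 - w z.2| ^ (p - 2) * (w z.1 - w z.2) * (φ z.1 - φ z.2) /
        ‖z.1 - z.2‖ ^ ((N:ℝ) + s * p)
      - |v z.1 - v z.2| ^ (p - 2) * (v z.1 - v z.2) * (φ z.1 - φ z.2) /
        ‖z.1 - z.2‖ ^ ((N:ℝ) + s * p))) = 0 := by
    rw [integral_sub hIW hIV]
    have hge : 0 ≤ (∫ z : RN N × RN N,
        |w z.1 - w z.2| ^ (p - 2) * (w z.1 - w z.2) * (φ z.1 - φ z.2) /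
          ‖z.1 - z.2‖ ^ ((N:ℝ) + s * p))
      - ∫ z : RN N × RN N,
        |v z.1 - v z.2| ^ (p - 2) * (v z.1 - v z.2) * (φ z.1 - φ z.2) /
          ‖z.1 - z.2‖ ^ ((N:ℝ) + s * p) := by
      rw [← integral_sub hIW hIV]
      exact integral_nonneg hsub_nonneg
    linarith [hineq, hge]
  have hae0 := (integral_eq_zero_iff_of_nonneg_ae (ae_of_all _ hsub_nonneg) hdiff_int).mp hint0
  -- deduce that φ z.1 = φ z.2 for a.e. z
  have haeφ : ∀ᵐ z : RN N × RN N ∂volume, φ z.1 = φ z.2 := by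
    filter_upwards [hae0, hKpos] with z h0 hkz
    have h0' : |w z.1 - w z.2| ^ (p - 2) * (w z.1 - w z.2) * (φ z.1 - φ z.2) /
        ‖z.1 - z.2‖ ^ ((N:ℝ) + s * p)
      - |v z.1 - v z.2| ^ (p - 2) * (v z.1 - v z.2) * (φ z.1 - φ z.2) /
        ‖z.1 - z.2‖ ^ ((N:ℝ) + s * p) = 0 := h0
    have e : |w z.1 - w z.2| ^ (p - 2) * (w z.1 - w z.2) * (φ z.1 - φ z.2) /
        ‖z.1 - z.2‖ ^ ((N:ℝ) + s * p)
      - |v z.1 - v z.2| ^ (p - 2) * (v z.1 - v z.2) * (φ z.1 - φ z.2) /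
        ‖z.1 - z.2‖ ^ ((N:ℝ) + s * p)
      = ((|w z.1 - w z.2| ^ (p - 2) * (w z.1 - w z.2)
            - |v z.1 - v z.2| ^ (p - 2) * (v z.1 - v z.2)) * (φ z.1 - φ z.2)) /
          ‖z.1 - z.2‖ ^ ((N:ℝ) + s * p) := by ring
    rw [e] at h0'
    have hnum := (div_eq_zero_iff.mp h0').resolve_right (ne_of_gt hkz)
    exact (hkey z).2 hnum
  -- Fubini: φ is a.e. constant
  rw [Measure.volume_eq_prod] at haeφ
  have haeφ' : ∀ᵐ x : RN N ∂volume, ∀ᵐ y : RN N ∂volume, φ x = φ y :=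
    Measure.ae_ae_of_ae_prod haeφ
  have huniv : (volume : Measure (RN N)) Set.univ = ⊤ :=
    measure_univ_of_isAddLeftInvariant volume
  haveI : (ae (volume : Measure (RN N))).NeBot := by
    rw [ae_neBot]
    intro h0
    rw [h0] at huniv
    simp at huniv
  obtain ⟨x₀, hx₀⟩ := haeφ'.exists
  have hcmem : MemLp (fun _ : RN N => φ x₀) (ENNReal.ofReal (pStar N s p)) volume :=
    MemLp.ae_eq (hx₀.mono fun y hy => hy.symm) hφmem
  have hc0 : φ x₀ = 0 := by
    rcases (memLp_const_iff (ENNReal.ofReal_pos.mpr hpstar).ne' ENNReal.ofReal_ne_top).mp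
      hcmem with h0 | h0
    · exact h0
    · rw [huniv] at h0
      exact absurd h0 (lt_irrefl _)
  filter_upwards [hx₀] with y hy
  have hy0 : φ y = 0 := by rw [← hy, hc0]
  have hy1 : max (w y - v y) 0 = 0 := hy0
  have hy2 : w y - v y ≤ max (w y - v y) 0 := le_max_left _ _
  rw [hy1] at hy2
  linarith
end
end

section
/- Let N ≥ 3, 0 < s < 1, 2 ≤ p < N/s, 0 < γ < 1, and let a satisfy (H_a). Let n ∈ ℕ, and suppose u, v ∈ D^{s,p}(ℝ^N) with u, v ≥ 0 a.e. are weak solutions of the regularized problems (P_n) and (P_{n+1}) respectively, i.e. ⟨(−Δ_p)^s u, φ⟩ = ∫_{ℝ^N} a (u + 1/n)^{−γ} φ dx and ⟨(−Δ_p)^s v, φ⟩ = ∫_{ℝ^N} a (v + 1/(n+1))^{−γ} φ dx for all φ ∈ D^{s,p}(ℝ^N). Then u ≤ v almost everywhere in ℝ^N; in particular the sequence of solutions to (P_n) is monotone non-decreasing in n. -/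
open MeasureTheory Metric

noncomputable section

lemma gfun_strictMono {q : ℝ} (hq : 0 ≤ q) : StrictMono (fun a : ℝ => |a| ^ q * a) := by
  have hpos : ∀ x : ℝ, 0 < x → 0 < |x| ^ q * x := fun x hx => by positivity
  have hodd : ∀ x : ℝ, |(-x)| ^ q * (-x) = -(|x| ^ q * x) := fun x => by rw [abs_neg]; ring
  have hmono : ∀ x y : ℝ, 0 ≤ x → x < y → |x| ^ q * x < |y| ^ q * y := by
    intro x y hx hxy
    rcases eq_or_lt_of_le hx with h | h
    · rw [← h]; simpa using hpos y (by linarith)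
    · rw [abs_of_pos h, abs_of_pos (h.trans hxy), ← Real.rpow_add_one h.ne',
        ← Real.rpow_add_one (h.trans hxy).ne']
      exact Real.rpow_lt_rpow h.le hxy (by linarith)
  intro a b hab
  rcases le_or_gt 0 a with ha | ha
  · exact hmono a b ha hab
  rcases lt_or_ge b 0 with hb | hb
  · have h1 := hmono (-b) (-a) (by linarith) (by linarith)
    have h2 := hodd a; have h3 := hodd b
    simp only at h1 h2 h3 ⊢
    linarith
  · have h1 := hpos (-a) (by linarith)
    have h2 := hodd a
    have h3 : 0 ≤ |b| ^ q * b := mul_nonneg (Real.rpow_nonneg (abs_nonneg b) q) hb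
    simp only at h1 h2 h3 ⊢
    linarith

lemma key_nonneg {p a b c d : ℝ} (hp : 2 ≤ p) (h : a - b = c - d) :
    0 ≤ (|a| ^ (p - 2) * a - |b| ^ (p - 2) * b) * (max c 0 - max d 0) := by
  have hm := gfun_strictMono (q := p - 2) (by linarith)
  rcases lt_trichotomy c d with hcd | hcd | hcd
  · have hab : a < b := by linarith
    have h1 : |a| ^ (p - 2) * a - |b| ^ (p - 2) * b ≤ 0 := sub_nonpos.2 (hm hab).le
    have h2 : max c 0 - max d 0 ≤ 0 := sub_nonpos.2 (max_le_max hcd.le le_rfl)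
    nlinarith [mul_nonneg (neg_nonneg.2 h1) (neg_nonneg.2 h2)]
  · have hab : a = b := by linarith
    simp [hab, hcd]
  · have hab : b < a := by linarith
    have h1 : 0 ≤ |a| ^ (p - 2) * a - |b| ^ (p - 2) * b := sub_nonneg.2 (hm hab).le
    have h2 : 0 ≤ max c 0 - max d 0 := sub_nonneg.2 (max_le_max hcd.le le_rfl)
    exact mul_nonneg h1 h2

lemma key_eq {p a b c d : ℝ} (hp : 2 ≤ p) (h : a - b = c - d)
    (hz : (|a| ^ (p - 2) * a - |b| ^ (p - 2) * b) * (max c 0 - max d 0) = 0) :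
    max c 0 = max d 0 := by
  have hm := gfun_strictMono (q := p - 2) (by linarith)
  rcases mul_eq_zero.1 hz with h1 | h1
  · have hab : a = b := hm.injective (sub_eq_zero.1 h1)
    have : c = d := by linarith
    rw [this]
  · exact sub_eq_zero.1 h1

lemma abs_gfun {p : ℝ} (hp : 2 ≤ p) (x : ℝ) : |(|x| ^ (p - 2) * x)| = |x| ^ (p - 1) := by
  rcases eq_or_ne x 0 with rfl | hx
  · simp [Real.zero_rpow (by linarith : p - 1 ≠ 0)]
  · rw [abs_mul, abs_of_nonneg (Real.rpow_nonneg (abs_nonneg x) _),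
      ← Real.rpow_add_one (abs_ne_zero.2 hx) (p - 2)]
    ring_nf

lemma young_aux {p x y : ℝ} (hp : 2 ≤ p) (hx : 0 ≤ x) (hy : 0 ≤ y) :
    x ^ (p - 1) * y ≤ x ^ p + y ^ p := by
  rcases eq_or_lt_of_le hx with h0 | hx0
  · rw [← h0, Real.zero_rpow (by linarith : p - 1 ≠ 0), zero_mul]
    positivity
  rcases le_total y x with h | h
  · have h1 : x ^ (p - 1) * y ≤ x ^ (p - 1) * x :=
      mul_le_mul_of_nonneg_left h (Real.rpow_nonneg hx0.le _)
    have h2 : x ^ (p - 1) * x = x ^ p := by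
      rw [← Real.rpow_add_one hx0.ne' (p - 1)]; norm_num
    have h3 : (0:ℝ) ≤ y ^ p := Real.rpow_nonneg hy _
    linarith
  · have hy0 : 0 < y := lt_of_lt_of_le hx0 h
    have h1 : x ^ (p - 1) * y ≤ y ^ (p - 1) * y :=
      mul_le_mul_of_nonneg_right (Real.rpow_le_rpow hx0.le h (by linarith)) hy0.le
    have h2 : y ^ (p - 1) * y = y ^ p := by
      rw [← Real.rpow_add_one hy0.ne' (p - 1)]; norm_num
    have h3 : (0:ℝ) ≤ x ^ p := Real.rpow_nonneg hx0.le _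
    linarith

lemma two_rpow_bound {p x y : ℝ} (hp : 0 ≤ p) (hx : 0 ≤ x) (hy : 0 ≤ y) :
    (x + y) ^ p ≤ 2 ^ p * (x ^ p + y ^ p) := by
  have h1 : x + y ≤ 2 * max x y := by
    rcases le_total x y with h | h
    · have := le_max_right x y; linarith [max_eq_right h]
    · have := le_max_left x y; linarith [max_eq_left h]
  calc (x + y) ^ p ≤ (2 * max x y) ^ p :=
        Real.rpow_le_rpow (by positivity) h1 hp
    _ = 2 ^ p * (max x y) ^ p := Real.mul_rpow (by norm_num) (le_max_of_le_left hx)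
    _ ≤ 2 ^ p * (x ^ p + y ^ p) := by
        have : (max x y) ^ p ≤ x ^ p + y ^ p := by
          rcases max_cases x y with ⟨h, _⟩ | ⟨h, _⟩ <;> rw [h]
          · linarith [Real.rpow_nonneg hy p]
          · linarith [Real.rpow_nonneg hx p]
        have h2 : (0:ℝ) ≤ 2 ^ p := by positivity
        nlinarith

lemma div_le_div_nonneg_denom {a b c : ℝ} (h : a ≤ b) (hc : 0 ≤ c) : a / c ≤ b / c := by
  rcases eq_or_lt_of_le hc with h0 | h0
  · simp [← h0]
  · gcongr


set_option maxHeartbeats 2000000 in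
/-- Monotonicity of the sequence of solutions to the regularized problems: if `u`
solves `(P_n)` and `v` solves `(P_{n+1})`, then `u ≤ v` a.e. in `ℝ^N`. -/
theorem regularized_solutions_monotone (N : ℕ) (hN : 3 ≤ N) (s p γ α : ℝ)
    (hs0 : 0 < s) (hs1 : s < 1) (hp : 2 ≤ p) (hpN : p < (N : ℝ) / s)
    (hγ0 : 0 < γ) (hγ1 : γ < 1)
    (hα1 : γ * ((N : ℝ) - s * p) / (p - 1) < α)
    (hα2 : α < γ * ((N : ℝ) - s * p) / (p - 1) + s * p)
    (a : RN N → ℝ) (ha_meas : Measurable a) (c_a : ℝ) (hca : 0 < c_a)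
    (ha : ∀ x, 0 ≤ a x ∧ a x ≤ c_a * weightW N α x)
    (n : ℕ) (hn : 0 < n) (u v : RN N → ℝ)
    (hu : DspMem N s p u) (hv : DspMem N s p v)
    (hu0 : ∀ᵐ x ∂(volume : Measure (RN N)), 0 ≤ u x)
    (hv0 : ∀ᵐ x ∂(volume : Measure (RN N)), 0 ≤ v x)
    (husol : ∀ φ : RN N → ℝ, DspMem N s p φ →
      fracPair N s p u φ = ∫ x : RN N, a x * (u x + 1 / (n : ℝ)) ^ (-γ) * φ x)
    (hvsol : ∀ φ : RN N → ℝ, DspMem N s p φ →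
      fracPair N s p v φ = ∫ x : RN N, a x * (v x + 1 / ((n : ℝ) + 1)) ^ (-γ) * φ x) :
    ∀ᵐ x ∂(volume : Measure (RN N)), u x ≤ v x := by
  classical
  -- basic numerology
  have hN3 : (3:ℝ) ≤ (N:ℝ) := by exact_mod_cast hN
  have hNpos : (0:ℝ) < N := by linarith
  have hspN : s * p < N := by
    have := (lt_div_iff₀ hs0).1 hpN
    linarith [mul_comm p s]
  have hNsp : (0:ℝ) < (N:ℝ) - s * p := by linarith
  have hps : 0 < pStar N s p := by
    unfold pStar
    apply div_pos (by nlinarith) hNsp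
  have hps1 : 1 ≤ pStar N s p := by
    rw [pStar, le_div_iff₀ hNsp]
    nlinarith
  have hP0 : (ENNReal.ofReal (pStar N s p)) ≠ 0 := by
    simp [ENNReal.ofReal_eq_zero, not_le, hps]
  have hPt : (ENNReal.ofReal (pStar N s p)) ≠ ⊤ := ENNReal.ofReal_ne_top
  have hnR : (0:ℝ) < (n:ℝ) := by exact_mod_cast hn
  have hα0 : 0 < α := by
    have : 0 < γ * ((N : ℝ) - s * p) / (p - 1) :=
      div_pos (mul_pos hγ0 hNsp) (by linarith)
    linarith
  -- the test function w = (u - v)⁺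
  set w : RN N → ℝ := fun x => max (u x - v x) 0 with hwdef
  have hw0 : ∀ x, 0 ≤ w x := fun x => le_max_right _ _
  -- measurability
  have hu_m : AEMeasurable u (volume : Measure (RN N)) := hu.1.aestronglyMeasurable.aemeasurable
  have hv_m : AEMeasurable v (volume : Measure (RN N)) := hv.1.aestronglyMeasurable.aemeasurable
  have hw_m : AEMeasurable w (volume : Measure (RN N)) := (hu_m.sub hv_m).max aemeasurable_const
  have hfst : Measure.QuasiMeasurePreserving (Prod.fst : RN N × RN N → RN N)
      (volume : Measure (RN N × RN N)) volume := by
    rw [Measure.volume_eq_prod]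
    exact Measure.quasiMeasurePreserving_fst
  have hsnd : Measure.QuasiMeasurePreserving (Prod.snd : RN N × RN N → RN N)
      (volume : Measure (RN N × RN N)) volume := by
    rw [Measure.volume_eq_prod]
    exact Measure.quasiMeasurePreserving_snd
  have hud_m : AEMeasurable (fun z : RN N × RN N => u z.1 - u z.2) volume :=
    (hu_m.comp_quasiMeasurePreserving hfst).sub (hu_m.comp_quasiMeasurePreserving hsnd)
  have hvd_m : AEMeasurable (fun z : RN N × RN N => v z.1 - v z.2) volume :=
    (hv_m.comp_quasiMeasurePreserving hfst).sub (hv_m.comp_quasiMeasurePreserving hsnd)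
  have hwd_m : AEMeasurable (fun z : RN N × RN N => w z.1 - w z.2) volume :=
    (hw_m.comp_quasiMeasurePreserving hfst).sub (hw_m.comp_quasiMeasurePreserving hsnd)
  have hK_m : Measurable (fun z : RN N × RN N => ‖z.1 - z.2‖ ^ ((N : ℝ) + s * p)) := by
    fun_prop
  have hK_nonneg : ∀ z : RN N × RN N, 0 ≤ ‖z.1 - z.2‖ ^ ((N : ℝ) + s * p) :=
    fun z => Real.rpow_nonneg (norm_nonneg _) _
  have hrp : Measurable (fun t : ℝ => |t| ^ p) := by fun_prop
  have hrp2 : Measurable (fun t : ℝ => |t| ^ (p - 2) * t) := by fun_prop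
  have hrng : Measurable (fun t : ℝ => t ^ (-γ)) := by fun_prop
  -- Gagliardo integrability of w
  have hGu := hu.2
  have hGv := hv.2
  have hwd_bound : ∀ z : RN N × RN N,
      |w z.1 - w z.2| ≤ |u z.1 - u z.2| + |v z.1 - v z.2| := by
    intro z
    have h1 : |w z.1 - w z.2| ≤ |(u z.1 - v z.1) - (u z.2 - v z.2)| := by
      simpa [hwdef] using abs_max_sub_max_le_abs (u z.1 - v z.1) (u z.2 - v z.2) 0
    calc |w z.1 - w z.2| ≤ |(u z.1 - v z.1) - (u z.2 - v z.2)| := h1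
      _ = |(u z.1 - u z.2) - (v z.1 - v z.2)| := by ring_nf
      _ ≤ |u z.1 - u z.2| + |v z.1 - v z.2| := abs_sub _ _
  have hGw_m : AEMeasurable (fun z : RN N × RN N =>
      |w z.1 - w z.2| ^ p / ‖z.1 - z.2‖ ^ ((N : ℝ) + s * p)) volume :=
    (hrp.comp_aemeasurable hwd_m).div hK_m.aemeasurable
  have hGw : Integrable (fun z : RN N × RN N =>
      |w z.1 - w z.2| ^ p / ‖z.1 - z.2‖ ^ ((N : ℝ) + s * p)) volume := by
    refine ((hGu.add hGv).const_mul ((2:ℝ) ^ p)).mono' hGw_m.aestronglyMeasurable ?_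
    refine Filter.Eventually.of_forall fun z => ?_
    have h1 : |w z.1 - w z.2| ^ p ≤ 2 ^ p * (|u z.1 - u z.2| ^ p + |v z.1 - v z.2| ^ p) := by
      calc |w z.1 - w z.2| ^ p ≤ (|u z.1 - u z.2| + |v z.1 - v z.2|) ^ p :=
            Real.rpow_le_rpow (abs_nonneg _) (hwd_bound z) (by linarith)
        _ ≤ 2 ^ p * (|u z.1 - u z.2| ^ p + |v z.1 - v z.2| ^ p) :=
            two_rpow_bound (by linarith) (abs_nonneg _) (abs_nonneg _)
    rw [Real.norm_eq_abs, abs_of_nonneg (div_nonneg (Real.rpow_nonneg (abs_nonneg _) _)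
      (hK_nonneg z))]
    calc |w z.1 - w z.2| ^ p / ‖z.1 - z.2‖ ^ ((N : ℝ) + s * p)
        ≤ (2 ^ p * (|u z.1 - u z.2| ^ p + |v z.1 - v z.2| ^ p)) /
            ‖z.1 - z.2‖ ^ ((N : ℝ) + s * p) := div_le_div_nonneg_denom h1 (hK_nonneg z)
      _ = 2 ^ p * (|u z.1 - u z.2| ^ p / ‖z.1 - z.2‖ ^ ((N : ℝ) + s * p) +
            |v z.1 - v z.2| ^ p / ‖z.1 - z.2‖ ^ ((N : ℝ) + s * p)) := by
          rw [mul_div_assoc, add_div]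
  -- Memℒp of w
  have hwLp : MemLp w (ENNReal.ofReal (pStar N s p)) volume := by
    refine MemLp.mono' (hu.1.norm.add hv.1.norm) hw_m.aestronglyMeasurable ?_
    refine Filter.Eventually.of_forall fun x => ?_
    rw [Real.norm_eq_abs, abs_of_nonneg (hw0 x)]
    have : w x ≤ |u x - v x| := by
      simp only [hwdef]
      exact max_le (le_abs_self _) (abs_nonneg _)
    calc w x ≤ |u x - v x| := this
      _ ≤ ‖u x‖ + ‖v x‖ := by rw [Real.norm_eq_abs, Real.norm_eq_abs]; exact abs_sub _ _
  have hwD : DspMem N s p w := ⟨hwLp, hGw⟩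
  -- integrability of the pairing integrands
  have hFu : Integrable (fun z : RN N × RN N =>
      |u z.1 - u z.2| ^ (p - 2) * (u z.1 - u z.2) * (w z.1 - w z.2) /
        ‖z.1 - z.2‖ ^ ((N : ℝ) + s * p)) volume := by
    refine (hGu.add hGw).mono'
      (((hrp2.comp_aemeasurable hud_m).mul hwd_m).div hK_m.aemeasurable).aestronglyMeasurable ?_
    refine Filter.Eventually.of_forall fun z => ?_
    rw [Real.norm_eq_abs, abs_div, abs_of_nonneg (hK_nonneg z), abs_mul, abs_gfun hp]
    have hb : |u z.1 - u z.2| ^ (p - 1) * |w z.1 - w z.2| ≤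
        |u z.1 - u z.2| ^ p + |w z.1 - w z.2| ^ p :=
      young_aux hp (abs_nonneg _) (abs_nonneg _)
    calc |u z.1 - u z.2| ^ (p - 1) * |w z.1 - w z.2| / ‖z.1 - z.2‖ ^ ((N : ℝ) + s * p)
        ≤ (|u z.1 - u z.2| ^ p + |w z.1 - w z.2| ^ p) / ‖z.1 - z.2‖ ^ ((N : ℝ) + s * p) :=
          div_le_div_nonneg_denom hb (hK_nonneg z)
      _ = |u z.1 - u z.2| ^ p / ‖z.1 - z.2‖ ^ ((N : ℝ) + s * p) +
          |w z.1 - w z.2| ^ p / ‖z.1 - z.2‖ ^ ((N : ℝ) + s * p) := add_div _ _ _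
  have hFv : Integrable (fun z : RN N × RN N =>
      |v z.1 - v z.2| ^ (p - 2) * (v z.1 - v z.2) * (w z.1 - w z.2) /
        ‖z.1 - z.2‖ ^ ((N : ℝ) + s * p)) volume := by
    refine (hGv.add hGw).mono'
      (((hrp2.comp_aemeasurable hvd_m).mul hwd_m).div hK_m.aemeasurable).aestronglyMeasurable ?_
    refine Filter.Eventually.of_forall fun z => ?_
    rw [Real.norm_eq_abs, abs_div, abs_of_nonneg (hK_nonneg z), abs_mul, abs_gfun hp]
    have hb : |v z.1 - v z.2| ^ (p - 1) * |w z.1 - w z.2| ≤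
        |v z.1 - v z.2| ^ p + |w z.1 - w z.2| ^ p :=
      young_aux hp (abs_nonneg _) (abs_nonneg _)
    calc |v z.1 - v z.2| ^ (p - 1) * |w z.1 - w z.2| / ‖z.1 - z.2‖ ^ ((N : ℝ) + s * p)
        ≤ (|v z.1 - v z.2| ^ p + |w z.1 - w z.2| ^ p) / ‖z.1 - z.2‖ ^ ((N : ℝ) + s * p) :=
          div_le_div_nonneg_denom hb (hK_nonneg z)
      _ = |v z.1 - v z.2| ^ p / ‖z.1 - z.2‖ ^ ((N : ℝ) + s * p) +
          |w z.1 - w z.2| ^ p / ‖z.1 - z.2‖ ^ ((N : ℝ) + s * p) := add_div _ _ _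
  -- integrability of the weight
  have hW0 : ∀ x : RN N, 0 ≤ weightW N α x := by
    intro x
    unfold weightW
    positivity
  have hW1 : ∀ x : RN N, weightW N α x ≤ 1 := by
    intro x
    unfold weightW
    rw [div_le_one (by positivity)]
    nlinarith [Real.rpow_nonneg (norm_nonneg x) ((N : ℝ) + α)]
  have hWm : Measurable (weightW N α) := by
    unfold weightW
    fun_prop
  have hWint : Integrable (weightW N α) (volume : Measure (RN N)) := by
    have hfinrank : (Module.finrank ℝ (RN N) : ℝ) < (N : ℝ) + α := by
      rw [finrank_euclideanSpace_fin]
      linarith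
    refine ((integrable_one_add_norm hfinrank).const_mul
      ((2 : ℝ) ^ ((N : ℝ) + α))).mono' hWm.aestronglyMeasurable ?_
    refine Filter.Eventually.of_forall fun x => ?_
    have ht : (0:ℝ) ≤ ‖x‖ := norm_nonneg x
    have htr : (0:ℝ) ≤ ‖x‖ ^ ((N : ℝ) + α) := Real.rpow_nonneg ht _
    have hd : (0:ℝ) < 1 + ‖x‖ ^ ((N : ℝ) + α) := by linarith
    have hr : (0:ℝ) < (N : ℝ) + α := by linarith
    have h1 : 1 + ‖x‖ ≤ 2 * max 1 ‖x‖ := by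
      have := le_max_left (1:ℝ) ‖x‖
      have := le_max_right (1:ℝ) ‖x‖
      linarith
    have h2 : (max 1 ‖x‖) ^ ((N : ℝ) + α) ≤ 1 + ‖x‖ ^ ((N : ℝ) + α) := by
      rcases max_cases (1:ℝ) ‖x‖ with ⟨h, _⟩ | ⟨h, _⟩ <;> rw [h]
      · rw [Real.one_rpow]; linarith
      · linarith
    have h3 : (1 + ‖x‖) ^ ((N : ℝ) + α) ≤ 2 ^ ((N : ℝ) + α) * (1 + ‖x‖ ^ ((N : ℝ) + α)) := by
      have h2p : (0:ℝ) ≤ 2 ^ ((N : ℝ) + α) := by positivity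
      calc (1 + ‖x‖) ^ ((N : ℝ) + α) ≤ (2 * max 1 ‖x‖) ^ ((N : ℝ) + α) :=
            Real.rpow_le_rpow (by linarith) h1 hr.le
        _ = 2 ^ ((N : ℝ) + α) * (max 1 ‖x‖) ^ ((N : ℝ) + α) :=
            Real.mul_rpow (by norm_num) (le_max_of_le_left zero_le_one)
        _ ≤ 2 ^ ((N : ℝ) + α) * (1 + ‖x‖ ^ ((N : ℝ) + α)) :=
            mul_le_mul_of_nonneg_left h2 h2p
    have h1t : (0:ℝ) < (1 + ‖x‖) ^ ((N : ℝ) + α) := Real.rpow_pos_of_pos (by linarith) _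
    have h4 : 1 / (1 + ‖x‖ ^ ((N : ℝ) + α)) ≤ 2 ^ ((N : ℝ) + α) / (1 + ‖x‖) ^ ((N : ℝ) + α) := by
      rw [div_le_div_iff₀ hd h1t]
      rw [one_mul]
      exact h3
    have h5 : ‖weightW N α x‖ = 1 / (1 + ‖x‖ ^ ((N : ℝ) + α)) := by
      rw [Real.norm_eq_abs, abs_of_nonneg (hW0 x)]
      rfl
    rw [h5, Real.rpow_neg (by linarith : (0:ℝ) ≤ 1 + ‖x‖), ← div_eq_mul_inv]
    exact h4
  -- integrability of |w|^{p*}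
  have hwP : Integrable (fun x : RN N => |w x| ^ pStar N s p) volume := by
    have h := hwLp.integrable_norm_rpow hP0 hPt
    simpa [Real.norm_eq_abs, ENNReal.toReal_ofReal hps.le] using h
  -- integrability of the right-hand sides
  have hRHSint : ∀ f : RN N → ℝ, AEMeasurable f volume →
      (∀ᵐ x ∂(volume : Measure (RN N)), 0 ≤ f x) → ∀ c : ℝ, 0 < c →
      Integrable (fun x => a x * (f x + c) ^ (-γ) * w x) volume := by
    intro f hf_m hf0 c hc
    refine ((hWint.add hwP).const_mul (c_a * c ^ (-γ))).mono'
      ((ha_meas.aemeasurable.mul (hrng.comp_aemeasurable (hf_m.add_const c))).mul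
        hw_m).aestronglyMeasurable ?_
    filter_upwards [hf0] with x hx
    have hfc : 0 < f x + c := by linarith
    have h3 : (f x + c) ^ (-γ) ≤ c ^ (-γ) :=
      Real.rpow_le_rpow_of_nonpos hc (by linarith) (by linarith)
    have ha1 := (ha x).1
    have ha2 := (ha x).2
    rw [Real.norm_eq_abs, abs_of_nonneg
      (mul_nonneg (mul_nonneg ha1 (Real.rpow_nonneg hfc.le _)) (hw0 x))]
    have key : weightW N α x * w x ≤ weightW N α x + |w x| ^ pStar N s p := by
      rcases le_total (w x) 1 with h | h
      · have h6 : weightW N α x * w x ≤ weightW N α x * 1 :=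
          mul_le_mul_of_nonneg_left h (hW0 x)
        rw [mul_one] at h6
        linarith [Real.rpow_nonneg (abs_nonneg (w x)) (pStar N s p)]
      · have hww : w x ≤ |w x| ^ pStar N s p := by
          rw [abs_of_nonneg (hw0 x)]
          calc w x = w x ^ (1:ℝ) := (Real.rpow_one _).symm
            _ ≤ w x ^ pStar N s p := Real.rpow_le_rpow_of_exponent_le h hps1
        have h6 : weightW N α x * w x ≤ 1 * w x :=
          mul_le_mul_of_nonneg_right (hW1 x) (hw0 x)
        rw [one_mul] at h6
        linarith [hW0 x]
    calc a x * (f x + c) ^ (-γ) * w x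
        ≤ c_a * weightW N α x * c ^ (-γ) * w x := by
          apply mul_le_mul_of_nonneg_right _ (hw0 x)
          exact mul_le_mul ha2 h3 (Real.rpow_nonneg hfc.le _)
            (mul_nonneg hca.le (hW0 x))
      _ = (c_a * c ^ (-γ)) * (weightW N α x * w x) := by ring
      _ ≤ (c_a * c ^ (-γ)) * (weightW N α x + |w x| ^ pStar N s p) := by
          apply mul_le_mul_of_nonneg_left key
          exact mul_nonneg hca.le (Real.rpow_nonneg hc.le _)
  have hf1 : Integrable (fun x => a x * (u x + 1 / (n : ℝ)) ^ (-γ) * w x) volume :=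
    hRHSint u hu_m hu0 (1 / (n : ℝ)) (by positivity)
  have hf2 : Integrable (fun x => a x * (v x + 1 / ((n : ℝ) + 1)) ^ (-γ) * w x) volume :=
    hRHSint v hv_m hv0 (1 / ((n : ℝ) + 1)) (by positivity)
  -- comparison of the right-hand sides
  have hle12 : ∀ᵐ x ∂(volume : Measure (RN N)),
      a x * (u x + 1 / (n : ℝ)) ^ (-γ) * w x ≤
      a x * (v x + 1 / ((n : ℝ) + 1)) ^ (-γ) * w x := by
    filter_upwards [hu0, hv0] with x hux hvx
    rcases eq_or_lt_of_le (hw0 x) with h0 | h0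
    · rw [← h0]
      simp
    · have huv : v x < u x := by
        by_contra hcon
        push_neg at hcon
        have hz : w x = 0 := max_eq_right (by linarith)
        linarith
      have h1n : 1 / ((n : ℝ) + 1) ≤ 1 / (n : ℝ) :=
        one_div_le_one_div_of_le hnR (by linarith)
      have hvpos : 0 < v x + 1 / ((n : ℝ) + 1) := by positivity
      have hcmp : (u x + 1 / (n : ℝ)) ^ (-γ) ≤ (v x + 1 / ((n : ℝ) + 1)) ^ (-γ) :=
        Real.rpow_le_rpow_of_nonpos hvpos (by linarith) (by linarith)
      exact mul_le_mul_of_nonneg_right (mul_le_mul_of_nonneg_left hcmp (ha x).1) (hw0 x)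
  have hIle : (∫ x : RN N, a x * (u x + 1 / (n : ℝ)) ^ (-γ) * w x) ≤
      ∫ x : RN N, a x * (v x + 1 / ((n : ℝ) + 1)) ^ (-γ) * w x :=
    integral_mono_ae hf1 hf2 hle12
  -- pointwise nonnegativity of the difference of the pairing integrands
  have hDnn : ∀ z : RN N × RN N, 0 ≤
      |u z.1 - u z.2| ^ (p - 2) * (u z.1 - u z.2) * (w z.1 - w z.2) /
        ‖z.1 - z.2‖ ^ ((N : ℝ) + s * p) -
      |v z.1 - v z.2| ^ (p - 2) * (v z.1 - v z.2) * (w z.1 - w z.2) /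
        ‖z.1 - z.2‖ ^ ((N : ℝ) + s * p) := by
    intro z
    have heq : |u z.1 - u z.2| ^ (p - 2) * (u z.1 - u z.2) * (w z.1 - w z.2) /
        ‖z.1 - z.2‖ ^ ((N : ℝ) + s * p) -
        |v z.1 - v z.2| ^ (p - 2) * (v z.1 - v z.2) * (w z.1 - w z.2) /
        ‖z.1 - z.2‖ ^ ((N : ℝ) + s * p) =
        ((|u z.1 - u z.2| ^ (p - 2) * (u z.1 - u z.2) -
          |v z.1 - v z.2| ^ (p - 2) * (v z.1 - v z.2)) * (w z.1 - w z.2)) /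
        ‖z.1 - z.2‖ ^ ((N : ℝ) + s * p) := by ring
    rw [heq]
    apply div_nonneg _ (hK_nonneg z)
    have hwz : w z.1 - w z.2 = max (u z.1 - v z.1) 0 - max (u z.2 - v z.2) 0 := by
      simp [hwdef]
    rw [hwz]
    exact key_nonneg hp (by ring)
  -- the pairing identity
  have hfp1 : fracPair N s p u w = ∫ z : RN N × RN N,
      |u z.1 - u z.2| ^ (p - 2) * (u z.1 - u z.2) * (w z.1 - w z.2) /
        ‖z.1 - z.2‖ ^ ((N : ℝ) + s * p) := rfl
  have hfp2 : fracPair N s p v w = ∫ z : RN N × RN N,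
      |v z.1 - v z.2| ^ (p - 2) * (v z.1 - v z.2) * (w z.1 - w z.2) /
        ‖z.1 - z.2‖ ^ ((N : ℝ) + s * p) := rfl
  have hsub : fracPair N s p u w - fracPair N s p v w = ∫ z : RN N × RN N,
      (|u z.1 - u z.2| ^ (p - 2) * (u z.1 - u z.2) * (w z.1 - w z.2) /
        ‖z.1 - z.2‖ ^ ((N : ℝ) + s * p) -
      |v z.1 - v z.2| ^ (p - 2) * (v z.1 - v z.2) * (w z.1 - w z.2) /
        ‖z.1 - z.2‖ ^ ((N : ℝ) + s * p)) := by
    rw [hfp1, hfp2]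
    exact (integral_sub hFu hFv).symm
  have h1 := husol w hwD
  have h2 := hvsol w hwD
  have hge : 0 ≤ ∫ z : RN N × RN N,
      (|u z.1 - u z.2| ^ (p - 2) * (u z.1 - u z.2) * (w z.1 - w z.2) /
        ‖z.1 - z.2‖ ^ ((N : ℝ) + s * p) -
      |v z.1 - v z.2| ^ (p - 2) * (v z.1 - v z.2) * (w z.1 - w z.2) /
        ‖z.1 - z.2‖ ^ ((N : ℝ) + s * p)) := integral_nonneg hDnn
  have hzero : (∫ z : RN N × RN N,
      (|u z.1 - u z.2| ^ (p - 2) * (u z.1 - u z.2) * (w z.1 - w z.2) /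
        ‖z.1 - z.2‖ ^ ((N : ℝ) + s * p) -
      |v z.1 - v z.2| ^ (p - 2) * (v z.1 - v z.2) * (w z.1 - w z.2) /
        ‖z.1 - z.2‖ ^ ((N : ℝ) + s * p))) = 0 := by
    apply le_antisymm _ hge
    rw [← hsub, h1, h2]
    linarith
  have haez : ∀ᵐ z : RN N × RN N ∂volume,
      |u z.1 - u z.2| ^ (p - 2) * (u z.1 - u z.2) * (w z.1 - w z.2) /
        ‖z.1 - z.2‖ ^ ((N : ℝ) + s * p) -
      |v z.1 - v z.2| ^ (p - 2) * (v z.1 - v z.2) * (w z.1 - w z.2) /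
        ‖z.1 - z.2‖ ^ ((N : ℝ) + s * p) = 0 := by
    have h := (integral_eq_zero_iff_of_nonneg_ae
      (Filter.Eventually.of_forall hDnn) (hFu.sub hFv)).1 hzero
    filter_upwards [h] with z hz using hz
  -- deduce that w is a.e. constant along both coordinates
  have haew : ∀ᵐ z : RN N × RN N ∂volume, w z.1 = w z.2 := by
    filter_upwards [haez] with z hz
    by_cases hne : ‖z.1 - z.2‖ = 0
    · have hz12 : z.1 = z.2 := by
        rwa [norm_sub_eq_zero_iff] at hne
      rw [hz12]
    · have hKpos : 0 < ‖z.1 - z.2‖ ^ ((N : ℝ) + s * p) :=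
        Real.rpow_pos_of_pos (lt_of_le_of_ne (norm_nonneg _) (Ne.symm hne)) _
      have heq : |u z.1 - u z.2| ^ (p - 2) * (u z.1 - u z.2) * (w z.1 - w z.2) /
          ‖z.1 - z.2‖ ^ ((N : ℝ) + s * p) -
          |v z.1 - v z.2| ^ (p - 2) * (v z.1 - v z.2) * (w z.1 - w z.2) /
          ‖z.1 - z.2‖ ^ ((N : ℝ) + s * p) =
          ((|u z.1 - u z.2| ^ (p - 2) * (u z.1 - u z.2) -
            |v z.1 - v z.2| ^ (p - 2) * (v z.1 - v z.2)) * (w z.1 - w z.2)) /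
          ‖z.1 - z.2‖ ^ ((N : ℝ) + s * p) := by ring
      rw [heq] at hz
      have hnum : (|u z.1 - u z.2| ^ (p - 2) * (u z.1 - u z.2) -
          |v z.1 - v z.2| ^ (p - 2) * (v z.1 - v z.2)) * (w z.1 - w z.2) = 0 := by
        rcases div_eq_zero_iff.1 hz with h | h
        · exact h
        · exact absurd h hKpos.ne'
      have hwz : w z.1 - w z.2 = max (u z.1 - v z.1) 0 - max (u z.2 - v z.2) 0 := by
        simp [hwdef]
      rw [hwz] at hnum
      have hmax := key_eq hp (by ring) hnum
      simpa [hwdef] using hmax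
  -- conclude: w is a.e. equal to a constant, which must be 0
  rw [Measure.volume_eq_prod] at haew
  have h' := Measure.ae_ae_of_ae_prod haew
  haveI : Nonempty (Fin N) := ⟨⟨0, by omega⟩⟩
  haveI : Nontrivial (RN N) := inferInstance
  have htop : (volume : Measure (RN N)) Set.univ = ⊤ :=
    measure_univ_of_isAddLeftInvariant volume
  have hvol0 : (volume : Measure (RN N)) ≠ 0 := by
    intro h
    rw [h] at htop
    simp at htop
  haveI : (ae (volume : Measure (RN N))).NeBot := ae_neBot.2 hvol0
  obtain ⟨x₀, hx₀⟩ := h'.exists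
  have hconst : w =ᵐ[volume] fun _ => w x₀ := hx₀.mono fun y hy => hy.symm
  have hmemc : MemLp (fun _ : RN N => w x₀) (ENNReal.ofReal (pStar N s p)) volume :=
    hwLp.ae_eq hconst
  have hwx0 : w x₀ = 0 := by
    rcases (memLp_const_iff hP0 hPt).1 hmemc with h | h
    · exact h
    · rw [htop] at h
      exact absurd h (lt_irrefl _)
  filter_upwards [hconst] with x hx
  have hle' : u x - v x ≤ w x := le_max_left _ _
  have : w x = 0 := by rw [hx, hwx0]
  linarith
end
end
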